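/- arXiv:2101.12542 — 4 statements merged into one kernel-verified Lean document; each statement's English description precedes it below -/
import Mathlib

section
/- Let X, Z be real Banach spaces, S ⊆ X a nonempty closed set, C ⊆ Z a proper closed convex cone with C ≠ {0}, and G : X ⇉ Z with G(x) ≠ ∅ for all x. Let R = S ∩ {x : G(x) ⊆ C} and x̄ ∈ R. Suppose that (i) G is lower semicontinuous at every point of some ball around x̄; (ii) G is metrically C-increasing around x̄ relative to S; (iii) G admits a positively homogeneous set-valued mapping H : X ⇉ Z as an outer prederivative at x̄; (iv) H is Lipschitz with respect to the Hausdorff distance. Then H⁺¹(C) ∩ T(S,x̄) ⊆ T(R,x̄), where H⁺¹(C) = {v : H(v) ⊆ C} and T(A,x̄) denotes the contingent cone to A at x̄. -/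
open Filter Topology Metric Set Pointwise
open scoped ENNReal NNReal

noncomputable section

/-- The `r`-enlargement `B(A,r)` of a set `A`. -/
def enlarge {Z : Type*} [SeminormedAddCommGroup Z] (A : Set Z) (r : ℝ) : Set Z :=
  {z | Metric.infDist z A ≤ r}

/-- Merit function `ν(x) = sup_{z ∈ G(x)} dist(z, C)`, with values in `[0,∞]`. -/
def merit {X Z : Type*} [SeminormedAddCommGroup Z] (G : X → Set Z) (C : Set Z) (x : X) : ℝ≥0∞ :=
  ⨆ z ∈ G x, ENNReal.ofReal (Metric.infDist z C)

/-- Lower semicontinuity of a set-valued map at a point. -/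
def LscAt {X Z : Type*} [TopologicalSpace X] [TopologicalSpace Z] (G : X → Set Z) (x : X) : Prop :=
  ∀ V : Set Z, IsOpen V → (G x ∩ V).Nonempty → ∃ U ∈ nhds x, ∀ u ∈ U, (G u ∩ V).Nonempty

/-- `G` is l.s.c. at every point of some ball around `xb`. -/
def LscAround {X Z : Type*} [SeminormedAddCommGroup X] [TopologicalSpace Z]
    (G : X → Set Z) (xb : X) : Prop :=
  ∃ ρ > 0, ∀ x ∈ Metric.closedBall xb ρ, LscAt G x

/-- `G` is metrically `C`-increasing around `xb` relative to `S`, with witnesses `α > 1`, `δ > 0`. -/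
def MetIncrWith {X Z : Type*} [SeminormedAddCommGroup X] [SeminormedAddCommGroup Z]
    (G : X → Set Z) (S : Set X) (C : Set Z) (xb : X) (α δ : ℝ) : Prop :=
  ∀ x ∈ Metric.closedBall xb δ ∩ S, ∀ r ∈ Set.Ioo (0:ℝ) δ,
    ∃ z ∈ Metric.closedBall x r ∩ S, enlarge (G z) (α * r) ⊆ enlarge (G x + C) r

/-- `G` is metrically `C`-increasing around `xb` relative to `S`. -/
def MetIncr {X Z : Type*} [SeminormedAddCommGroup X] [SeminormedAddCommGroup Z]
    (G : X → Set Z) (S : Set X) (C : Set Z) (xb : X) : Prop :=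
  ∃ α > 1, ∃ δ > 0, MetIncrWith G S C xb α δ

/-- The exact bound of metric `C`-increase of `G` around `xb`, relative to `S`. -/
def incrBound {X Z : Type*} [SeminormedAddCommGroup X] [SeminormedAddCommGroup Z]
    (G : X → Set Z) (S : Set X) (C : Set Z) (xb : X) : ℝ≥0∞ :=
  sSup {a : ℝ≥0∞ | ∃ α : ℝ, a = ENNReal.ofReal α ∧ 1 < α ∧ ∃ δ > 0, MetIncrWith G S C xb α δ}

open Classical in
/-- Strong slope of `φ` relative to `S` at `x`: `0` if `x` is a local minimizer of `φ` on `S`,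
otherwise `inf_{r>0} sup_{z ∈ B(x,r)∩S, z ≠ x} (φ(x) − φ(z))/‖x−z‖`. -/
def strongSlope {X : Type*} [SeminormedAddCommGroup X] (φ : X → ℝ≥0∞) (S : Set X) (x : X) :
    ℝ≥0∞ :=
  if ∃ r > 0, ∀ z ∈ S ∩ Metric.closedBall x r, φ x ≤ φ z then 0
  else ⨅ r ∈ Set.Ioi (0:ℝ), ⨆ z ∈ (S ∩ Metric.closedBall x r) \ {x},
    (φ x - φ z) / ENNReal.ofReal ‖x - z‖

/-- `ψ` is a local error bound function for `R` near `xb`, relative to `S`. -/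
def LocErrBoundFun {X : Type*} [SeminormedAddCommGroup X]
    (ψ : X → ℝ≥0∞) (R S : Set X) (xb : X) : Prop :=
  ∃ δ > 0, (∀ x ∈ Metric.closedBall xb δ ∩ S, ENNReal.ofReal (Metric.infDist x R) ≤ ψ x) ∧
    ∀ x ∈ R, ψ x = ENNReal.ofReal (Metric.infDist x R)

/-- `f` is `K`-Lipschitz near `xb` with constant `ℓ` and vector `e`. -/
def KLipschitzNearWith {X Y : Type*} [SeminormedAddCommGroup X] [SeminormedAddCommGroup Y]
    [NormedSpace ℝ Y] (f : X → Y) (K : Set Y) (xb : X) (ℓ : ℝ) (e : Y) : Prop :=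
  ∃ δ > 0, ∀ x₁ ∈ Metric.closedBall xb δ, ∀ x₂ ∈ Metric.closedBall xb δ,
    f x₁ - f x₂ + (ℓ * ‖x₁ - x₂‖) • e ∈ K

/-- `xb` is a locally weakly efficient solution of minimizing `f` over `R`
(w.r.t. the ordering cone `K`). -/
def LocWeakEffOn {X Y : Type*} [SeminormedAddCommGroup X] [SeminormedAddCommGroup Y]
    (f : X → Y) (R : Set X) (K : Set Y) (xb : X) : Prop :=
  ∃ δ > 0, ∀ x ∈ R ∩ Metric.closedBall xb δ, f xb - f x ∉ interior K

/-- `xb` is a locally efficient solution of minimizing `f` over `R`. -/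
def LocEffOn {X Y : Type*} [SeminormedAddCommGroup X] [SeminormedAddCommGroup Y]
    (f : X → Y) (R : Set X) (K : Set Y) (xb : X) : Prop :=
  ∃ δ > 0, ∀ x ∈ R ∩ Metric.closedBall xb δ, f xb - f x ∈ K → f x = f xb

/-- Contingent (Bouligand tangent) cone to `A` at `xb`. -/
def contingentCone {X : Type*} [SeminormedAddCommGroup X] [NormedSpace ℝ X]
    (A : Set X) (xb : X) : Set X :=
  {v | ∃ (vn : ℕ → X) (tn : ℕ → ℝ), Filter.Tendsto vn Filter.atTop (nhds v) ∧
    Filter.Tendsto tn Filter.atTop (nhds 0) ∧ (∀ n, 0 < tn n) ∧ ∀ n, xb + tn n • vn n ∈ A}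

/-- Feasible direction cone to `A` at `xb`. -/
def feasDirCone {X : Type*} [SeminormedAddCommGroup X] [NormedSpace ℝ X]
    (A : Set X) (xb : X) : Set X :=
  {v | ∃ δ > 0, ∀ t ∈ Set.Ioo (0:ℝ) δ, xb + t • v ∈ A}

/-- Weak feasible direction cone to `A` at `xb`. -/
def weakFeasDirCone {X : Type*} [SeminormedAddCommGroup X] [NormedSpace ℝ X]
    (A : Set X) (xb : X) : Set X :=
  {v | ∀ ε > 0, ∃ t ∈ Set.Ioo (0:ℝ) ε, xb + t • v ∈ A}

/-- Fréchet upper subdifferential of an `[0,∞]`-valued function `φ` (finite at `xb`) at `xb`. -/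
def FUpperSubdiff {X : Type*} [NormedAddCommGroup X] [NormedSpace ℝ X]
    (φ : X → ℝ≥0∞) (xb : X) : Set (X →L[ℝ] ℝ) :=
  {p | ∀ ε > 0, ∃ δ > 0, ∀ x ∈ Metric.ball xb δ, x ≠ xb →
    φ x ≠ ⊤ ∧ (φ x).toReal - (φ xb).toReal - p (x - xb) ≤ ε * ‖x - xb‖}

/-- `d` is the directional derivative of `f` at `xb` in direction `v`. -/
def HasDirDerivAt {X Y : Type*} [SeminormedAddCommGroup X] [NormedSpace ℝ X]
    [SeminormedAddCommGroup Y] [NormedSpace ℝ Y] (f : X → Y) (xb v : X) (d : Y) : Prop :=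
  Filter.Tendsto (fun t : ℝ => t⁻¹ • (f (xb + t • v) - f xb)) (nhdsWithin 0 (Set.Ioi 0)) (nhds d)

/-- `H` is an outer prederivative of `G` at `xb`. -/
def OuterPrederivAt {X Z : Type*} [SeminormedAddCommGroup X] [NormedSpace ℝ X]
    [SeminormedAddCommGroup Z] [NormedSpace ℝ Z] (G H : X → Set Z) (xb : X) : Prop :=
  (∀ t : ℝ, 0 < t → ∀ v, H (t • v) = t • H v) ∧
  ∀ ε > 0, ∃ δ > 0, ∀ x ∈ Metric.closedBall xb δ,
    G x ⊆ G xb + H (x - xb) + Metric.closedBall 0 (ε * ‖x - xb‖)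

/-- `H` is Lipschitz with respect to the Hausdorff distance. -/
def HausLipschitz {X Z : Type*} [SeminormedAddCommGroup X] [SeminormedAddCommGroup Z]
    (H : X → Set Z) : Prop :=
  ∃ l : ℝ, 0 ≤ l ∧ ∀ x₁ x₂ : X,
    EMetric.hausdorffEdist (H x₁) (H x₂) ≤ ENNReal.ofReal (l * ‖x₁ - x₂‖)

/-- `h` is the B-derivative of `f` at `xb`. -/
def IsBDerivAt {X Y : Type*} [NormedAddCommGroup X] [NormedSpace ℝ X]
    [NormedAddCommGroup Y] [NormedSpace ℝ Y] (f : X → Y) (h : X → Y) (xb : X) : Prop :=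
  Continuous h ∧ (∀ t : ℝ, 0 < t → ∀ v, h (t • v) = t • h v) ∧
  Filter.Tendsto (fun x => ‖x - xb‖⁻¹ • (f x - f xb - h (x - xb)))
    (nhdsWithin xb {xb}ᶜ) (nhds 0)

/-- Upper inverse image `H⁺¹(C)` of `C` through `H`. -/
def upperInv {X Z : Type*} (H : X → Set Z) (C : Set Z) : Set X := {x | H x ⊆ C}

end

/-- Separation lemma: if `w ∉ C` for a closed convex cone `C`, and every point of the
ball `B(w, s)` is within `M` of `C`, then `infDist w C + s ≤ M`. -/
lemma cone_sep {Z : Type*} [NormedAddCommGroup Z] [NormedSpace ℝ Z]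
    {C : Set Z} (hCcl : IsClosed C) (hCconv : Convex ℝ C)
    (hCcone : ∀ t : ℝ, 0 < t → ∀ z ∈ C, t • z ∈ C) (hC0 : (0:Z) ∈ C)
    {w : Z} (hw : w ∉ C) {s M : ℝ} (hs : 0 ≤ s) (hM : 0 ≤ M)
    (hb : ∀ e : Z, ‖e‖ ≤ 1 → Metric.infDist (w - s • e) C ≤ M) :
    Metric.infDist w C + s ≤ M := by
  set d := Metric.infDist w C with hdd
  have hd : 0 < d := (hCcl.notMem_iff_infDist_pos ⟨0, hC0⟩).1 hw
  by_contra hcon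
  push_neg at hcon
  set ε := (d + s - M)/2 with hεdef
  have hεpos : 0 < ε := by simp only [hεdef]; linarith
  have hds : 0 < d + s := by linarith
  set θ := (d + s + M)/(2*(d+s)) with hθdef
  have hθ1 : θ < 1 := by
    rw [hθdef, div_lt_one (by linarith)]; linarith
  have hθ0 : 0 < θ := by
    rw [hθdef]; positivity
  have hdisj : Disjoint (Metric.ball w d) C := by
    rw [Set.disjoint_left]
    intro a ha haC
    have h1 : Metric.infDist w C ≤ dist a w := by
      rw [dist_comm]; exact Metric.infDist_le_dist_of_mem haC
    rw [Metric.mem_ball] at ha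
    linarith [ha, h1]
  obtain ⟨f, u, hfu₁, hfu₂⟩ :=
    geometric_hahn_banach_open (convex_ball w d) Metric.isOpen_ball hCconv hdisj
  have hu0 : u ≤ 0 := by simpa using hfu₂ 0 hC0
  have hfw : f w < 0 := lt_of_lt_of_le (hfu₁ w (Metric.mem_ball_self hd)) hu0
  have hf0 : f ≠ 0 := by
    intro h; rw [h] at hfw; simp at hfw
  have hfn : 0 < ‖f‖ := norm_pos_iff.2 hf0
  have hfC : ∀ c ∈ C, 0 ≤ f c := by
    intro c hc
    by_contra h
    push_neg at h
    have ht : 0 < (u - 1)/(f c) := div_pos_of_neg_of_neg (by linarith) h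
    have h2 := hfu₂ _ (hCcone _ ht c hc)
    rw [map_smul, smul_eq_mul, div_mul_cancel₀ _ (ne_of_lt h)] at h2
    linarith
  obtain ⟨e₀, he₀, hfe₀⟩ :=
    f.exists_lt_apply_of_lt_opNorm (mul_lt_of_lt_one_left hfn hθ1 : θ * ‖f‖ < ‖f‖)
  obtain ⟨e, he, hfe⟩ : ∃ e : Z, ‖e‖ < 1 ∧ θ * ‖f‖ < f e := by
    rcases le_or_gt 0 (f e₀) with h | h
    · exact ⟨e₀, he₀, by rwa [Real.norm_eq_abs, abs_of_nonneg h] at hfe₀⟩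
    · exact ⟨-e₀, by simpa using he₀, by
        rw [map_neg]
        rwa [Real.norm_eq_abs, abs_of_neg h] at hfe₀⟩
  have hfe0 : 0 < f e := lt_of_le_of_lt (by positivity) hfe
  have h1 : f w + d * f e < 0 := by
    have hmem : w + d • e ∈ Metric.ball w d := by
      rw [Metric.mem_ball, dist_eq_norm, add_sub_cancel_left, norm_smul,
        Real.norm_eq_abs, abs_of_pos hd]
      calc d * ‖e‖ < d * 1 := by
            exact mul_lt_mul_of_pos_left he hd
        _ = d := mul_one d
    have := lt_of_lt_of_le (hfu₁ _ hmem) hu0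
    simpa [map_add, map_smul, smul_eq_mul] using this
  obtain ⟨c, hc, hdc⟩ := (Metric.infDist_lt_iff ⟨0, hC0⟩).1
    (lt_of_le_of_lt (hb e he.le) (lt_add_of_pos_right M hεpos))
  have h2 : (d + s) * (θ * ‖f‖) < f (c - (w - s • e)) := by
    have heq : f (c - (w - s • e)) = f c - f w + s * f e := by
      simp [map_sub, map_smul, smul_eq_mul]; ring
    rw [heq]
    have h3 := hfC c hc
    have hint : (d + s) * (θ * ‖f‖) < (d + s) * f e := mul_lt_mul_of_pos_left hfe hds
    nlinarith [h1, h3, hint]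
  have h4 : f (c - (w - s • e)) ≤ ‖f‖ * (M + ε) := by
    have hn : ‖c - (w - s • e)‖ ≤ M + ε := by
      rw [← dist_eq_norm, dist_comm]
      exact hdc.le
    calc f (c - (w - s • e)) ≤ ‖f (c - (w - s • e))‖ := le_abs_self _
      _ ≤ ‖f‖ * ‖c - (w - s • e)‖ := f.le_opNorm _
      _ ≤ ‖f‖ * (M + ε) := mul_le_mul_of_nonneg_left hn (norm_nonneg f)
  have h5 : (d + s) * θ < M + ε := by
    have h := lt_of_lt_of_le h2 h4
    nlinarith [hfn]
  have h6 : (d + s) * θ = M + ε := by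
    rw [hθdef, hεdef]
    field_simp
    ring
  linarith

/-- inner tangential approximation of the solution set of a set-valued
inclusion via Lipschitz outer prederivatives (contingent cone version). -/
theorem statement_9
    {X Z : Type*} [NormedAddCommGroup X] [NormedSpace ℝ X] [CompleteSpace X]
    [NormedAddCommGroup Z] [NormedSpace ℝ Z] [CompleteSpace Z]
    (S : Set X) (hSne : S.Nonempty) (hScl : IsClosed S)
    (C : Set Z) (hCcl : IsClosed C) (hCconv : Convex ℝ C)
    (hCcone : ∀ t : ℝ, 0 < t → ∀ z ∈ C, t • z ∈ C) (hC0 : (0:Z) ∈ C)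
    (hCne0 : C ≠ {0}) (hCneuniv : C ≠ Set.univ)
    (G : X → Set Z) (hG : ∀ x, (G x).Nonempty)
    (xb : X) (hxbS : xb ∈ S) (hxbG : G xb ⊆ C)
    (hlsc : LscAround G xb) (hmi : MetIncr G S C xb)
    (H : X → Set Z) (hH : OuterPrederivAt G H xb) (hHLip : HausLipschitz H) :
    upperInv H C ∩ contingentCone S xb ⊆ contingentCone (S ∩ {x | G x ⊆ C}) xb := by
  obtain ⟨α, hα, δ, hδ, hMI⟩ := hmi
  obtain ⟨l, hl0, hLip⟩ := hHLip
  obtain ⟨Hpos, Hpre⟩ := hH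
  rintro v ⟨hvC, vn, tn, hvn, htn, htnpos, hmem⟩
  set R : Set X := S ∩ {x | G x ⊆ C} with hRdef
  have hxbR : xb ∈ R := ⟨hxbS, hxbG⟩
  -- C + C ⊆ C
  have hCC : ∀ c₁ ∈ C, ∀ c₂ ∈ C, c₁ + c₂ ∈ C := by
    intro c₁ h₁ c₂ h₂
    have hmid : (1/2 : ℝ) • c₁ + (1/2 : ℝ) • c₂ ∈ C :=
      hCconv h₁ h₂ (by norm_num) (by norm_num) (by norm_num)
    have := hCcone 2 (by norm_num) _ hmid
    rwa [smul_add, smul_smul, smul_smul, (by norm_num : (2:ℝ) * (1/2) = 1),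
      one_smul, one_smul] at this
  -- Lemma A : one-step error bound
  have lemA : ∀ x ∈ Metric.closedBall xb δ ∩ S, ∀ ρ : ℝ, 0 < ρ → ρ < δ →
      (∀ w ∈ G x, Metric.infDist w C ≤ (α - 1) * ρ) →
      ∃ y ∈ R, dist x y ≤ ρ := by
    intro x hx ρ hρ0 hρδ hmer
    obtain ⟨z, hz, hincl⟩ := hMI x hx ρ ⟨hρ0, hρδ⟩
    refine ⟨z, ⟨hz.2, ?_⟩, by rw [dist_comm]; exact Metric.mem_closedBall.1 hz.1⟩
    intro w hw
    by_contra hwC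
    have hαρ : 0 < α * ρ := mul_pos (by linarith) hρ0
    have hGxC : (G x + C).Nonempty := by
      obtain ⟨u₀, hu₀⟩ := hG x
      exact ⟨u₀ + 0, Set.add_mem_add hu₀ hC0⟩
    have hbb : ∀ e : Z, ‖e‖ ≤ 1 → Metric.infDist (w - (α * ρ) • e) C ≤ α * ρ := by
      intro e he
      set ζ := w - (α * ρ) • e with hζ
      have hζmem : ζ ∈ enlarge (G z) (α * ρ) := by
        show Metric.infDist ζ (G z) ≤ α * ρ
        calc Metric.infDist ζ (G z) ≤ dist ζ w := Metric.infDist_le_dist_of_mem hw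
          _ = ‖(α * ρ) • e‖ := by rw [dist_eq_norm, sub_sub_cancel_left, norm_neg]
          _ = (α * ρ) * ‖e‖ := by rw [norm_smul, Real.norm_eq_abs, abs_of_pos hαρ]
          _ ≤ (α * ρ) * 1 := mul_le_mul_of_nonneg_left he hαρ.le
          _ = α * ρ := mul_one _
      have hζ2 : Metric.infDist ζ (G x + C) ≤ ρ := hincl hζmem
      refine le_of_forall_pos_le_add ?_
      intro ε hε
      obtain ⟨y, hy, hdy⟩ := (Metric.infDist_lt_iff hGxC).1
        (hζ2.trans_lt (lt_add_of_pos_right ρ (half_pos hε)))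
      obtain ⟨u', hu', c, hc, hyc⟩ := Set.mem_add.1 hy
      obtain ⟨c'', hc'', hdc⟩ := (Metric.infDist_lt_iff ⟨0, hC0⟩).1
        ((hmer u' hu').trans_lt (lt_add_of_pos_right _ (half_pos hε)))
      calc Metric.infDist ζ C ≤ dist ζ (c + c'') :=
            Metric.infDist_le_dist_of_mem (hCC c hc c'' hc'')
        _ ≤ dist ζ (u' + c) + dist (u' + c) (c + c'') := dist_triangle _ _ _
        _ = dist ζ y + dist u' c'' := by
            have h9 : dist (u' + c) (c + c'') = dist u' c'' := by
              rw [dist_eq_norm, dist_eq_norm]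
              congr 1
              abel
            rw [h9, hyc]
        _ ≤ (ρ + ε/2) + ((α - 1) * ρ + ε/2) := add_le_add hdy.le hdc.le
        _ = α * ρ + ε := by ring
    have hsep := cone_sep hCcl hCconv hCcone hC0 hwC hαρ.le hαρ.le hbb
    have hd : 0 < Metric.infDist w C := (hCcl.notMem_iff_infDist_pos ⟨0, hC0⟩).1 hwC
    linarith
  -- key estimate
  have key : ∀ ε : ℝ, 0 < ε → ∀ᶠ n in atTop,
      Metric.infDist (xb + tn n • vn n) R ≤ ε * tn n := by
    intro ε hε
    have hvpos : (0:ℝ) < 2 + ‖v‖ := by positivity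
    set ε₀ := (α - 1) * ε / (2 * (2 + ‖v‖)) with hε₀def
    have hε₀ : 0 < ε₀ := by
      rw [hε₀def]
      have : 0 < α - 1 := by linarith
      positivity
    obtain ⟨δ₁, hδ₁, hP⟩ := Hpre ε₀ hε₀
    have htv : Tendsto (fun n => tn n * ‖vn n‖) atTop (𝓝 0) := by
      simpa using htn.mul hvn.norm
    have h1 : ∀ᶠ n in atTop, tn n * ‖vn n‖ < min δ δ₁ :=
      htv.eventually_lt_const (lt_min hδ hδ₁)
    have h2 : ∀ᶠ n in atTop, ε * tn n < δ := by
      have : Tendsto (fun n => ε * tn n) atTop (𝓝 0) := by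
        simpa using htn.const_mul ε
      exact this.eventually_lt_const hδ
    have h3 : ∀ᶠ n in atTop, l * ‖vn n - v‖ < (α - 1) * ε / 2 := by
      have hsub : Tendsto (fun n => l * ‖vn n - v‖) atTop (𝓝 0) := by
        have : Tendsto (fun n => vn n - v) atTop (𝓝 0) := by
          simpa using hvn.sub (tendsto_const_nhds (x := v))
        simpa using (this.norm.const_mul l)
      exact hsub.eventually_lt_const (by nlinarith)
    have h4 : ∀ᶠ n in atTop, ‖vn n‖ < 1 + ‖v‖ :=
      hvn.norm.eventually_lt_const (by linarith)
    filter_upwards [h1, h2, h3, h4] with n hn1 hn2 hn3 hn4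
    set t := tn n with htdef
    set vv := vn n with hvvdef
    have htpos : 0 < t := htnpos n
    set x := xb + t • vv with hxdef
    have hxS : x ∈ S := hmem n
    have hxnorm : ‖x - xb‖ = t * ‖vv‖ := by
      rw [hxdef, add_sub_cancel_left, norm_smul, Real.norm_eq_abs, abs_of_pos htpos]
    have hxball : x ∈ Metric.closedBall xb δ := by
      rw [Metric.mem_closedBall, dist_eq_norm, hxnorm]
      exact le_of_lt (lt_of_lt_of_le hn1 (min_le_left _ _))
    have hxball₁ : x ∈ Metric.closedBall xb δ₁ := by
      rw [Metric.mem_closedBall, dist_eq_norm, hxnorm]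
      exact le_of_lt (lt_of_lt_of_le hn1 (min_le_right _ _))
    have hmer : ∀ w ∈ G x, Metric.infDist w C ≤ (α - 1) * (ε * t) := by
      intro w hw
      have hwmem := hP x hxball₁ hw
      have hxsub : x - xb = t • vv := by rw [hxdef, add_sub_cancel_left]
      rw [hxsub] at hwmem
      obtain ⟨a, ha, b, hb, hab⟩ := Set.mem_add.1 hwmem
      obtain ⟨u, hu, h, hh, huh⟩ := Set.mem_add.1 ha
      rw [Hpos t htpos vv] at hh
      obtain ⟨h', hh', hh'eq⟩ := Set.mem_smul_set.1 hh
      -- infEdist h' C ≤ ofReal (l * ‖vv - v‖)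
      have hed : EMetric.infEdist h' C ≤ ENNReal.ofReal (l * ‖vv - v‖) := by
        calc EMetric.infEdist h' C ≤ EMetric.infEdist h' (H v) :=
              EMetric.infEdist_anti hvC
          _ ≤ EMetric.infEdist h' (H vv) + EMetric.hausdorffEdist (H vv) (H v) :=
              EMetric.infEdist_le_infEdist_add_hausdorffEdist
          _ = EMetric.hausdorffEdist (H vv) (H v) := by
              rw [show EMetric.infEdist h' (H vv) = 0 from EMetric.infEdist_zero_of_mem hh', zero_add]
          _ ≤ ENNReal.ofReal (l * ‖vv - v‖) := hLip vv v
      have hed2 : EMetric.infEdist h' C < ENNReal.ofReal (l * ‖vv - v‖ + ε₀) := by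
        refine lt_of_le_of_lt hed ?_
        rw [ENNReal.ofReal_lt_ofReal_iff (by positivity)]
        linarith
      obtain ⟨c', hc', hec⟩ := EMetric.infEdist_lt_iff.1 hed2
      rw [edist_lt_ofReal] at hec
      -- the candidate point u + t • c' ∈ C
      have hcand : u + t • c' ∈ C := hCC u (hxbG hu) _ (hCcone t htpos c' hc')
      have hbnorm : ‖b‖ ≤ ε₀ * (t * ‖vv‖) := by
        have := Metric.mem_closedBall.1 hb
        rw [dist_zero_right] at this
        calc ‖b‖ ≤ ε₀ * ‖t • vv‖ := this
          _ = ε₀ * (t * ‖vv‖) := by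
              rw [norm_smul, Real.norm_eq_abs, abs_of_pos htpos]
      have hwd : dist w (u + t • c') ≤ t * (l * ‖vv - v‖ + ε₀) + ε₀ * (t * ‖vv‖) := by
        have hweq : w - (u + t • c') = t • (h' - c') + b := by
          rw [← hab, ← huh, ← hh'eq]
          rw [smul_sub]
          abel
        rw [dist_eq_norm, hweq]
        calc ‖t • (h' - c') + b‖ ≤ ‖t • (h' - c')‖ + ‖b‖ := norm_add_le _ _
          _ ≤ t * (l * ‖vv - v‖ + ε₀) + ε₀ * (t * ‖vv‖) := by
              refine add_le_add ?_ hbnorm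
              rw [norm_smul, Real.norm_eq_abs, abs_of_pos htpos]
              refine mul_le_mul_of_nonneg_left ?_ htpos.le
              rw [← dist_eq_norm]
              exact hec.le
      have hfinal : t * (l * ‖vv - v‖ + ε₀) + ε₀ * (t * ‖vv‖) ≤ (α - 1) * (ε * t) := by
        have e1 : l * ‖vv - v‖ ≤ (α - 1) * ε / 2 := hn3.le
        have e2 : ε₀ * (1 + ‖vv‖) ≤ (α - 1) * ε / 2 := by
          have : ε₀ * (1 + ‖vv‖) ≤ ε₀ * (2 + ‖v‖) :=
            mul_le_mul_of_nonneg_left (by linarith) hε₀.le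
          rw [hε₀def] at this ⊢
          calc (α - 1) * ε / (2 * (2 + ‖v‖)) * (1 + ‖vv‖)
              ≤ (α - 1) * ε / (2 * (2 + ‖v‖)) * (2 + ‖v‖) := this
            _ = (α - 1) * ε / 2 := by field_simp
        nlinarith [htpos.le, e1, e2]
      exact le_trans (Metric.infDist_le_dist_of_mem hcand) (le_trans hwd hfinal)
    obtain ⟨y, hyR, hyd⟩ := lemA x ⟨hxball, hxS⟩ (ε * t) (mul_pos hε htpos) hn2 hmer
    calc Metric.infDist x R ≤ dist x y := Metric.infDist_le_dist_of_mem hyR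
      _ ≤ ε * t := hyd
  -- assemble the contingent cone membership
  set xn : ℕ → X := fun n => xb + tn n • vn n with hxn
  have hRne : R.Nonempty := ⟨xb, hxbR⟩
  have hchoice : ∀ n, ∃ y ∈ R, dist (xn n) y <
      Metric.infDist (xn n) R + tn n * ((n : ℝ) + 1)⁻¹ := by
    intro n
    refine (Metric.infDist_lt_iff hRne).1 ?_
    have : 0 < tn n * ((n : ℝ) + 1)⁻¹ := by
      have := htnpos n
      positivity
    linarith
  choose y hyR hyd using hchoice
  set wn : ℕ → X := fun n => (tn n)⁻¹ • (y n - xb) with hwn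
  have hyx : ∀ n, xb + tn n • wn n = y n := by
    intro n
    rw [hwn]
    simp only [smul_smul, mul_inv_cancel₀ (htnpos n).ne', one_smul]
    abel
  -- dn / tn → 0
  have hdt : Tendsto (fun n => Metric.infDist (xn n) R / tn n) atTop (𝓝 0) := by
    rw [Metric.tendsto_atTop]
    intro ε hε
    have := key (ε/2) (half_pos hε)
    rw [eventually_atTop] at this
    obtain ⟨N, hN⟩ := this
    refine ⟨N, fun n hn => ?_⟩
    have h := hN n hn
    have htp := htnpos n
    have hnn : 0 ≤ Metric.infDist (xn n) R / tn n :=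
      div_nonneg Metric.infDist_nonneg htp.le
    rw [Real.dist_eq, sub_zero, abs_of_nonneg hnn]
    have h10 : Metric.infDist (xn n) R / tn n ≤ ε/2 := (div_le_iff₀ htp).2 h
    linarith
  have hwv : Tendsto wn atTop (𝓝 v) := by
    have hsub : Tendsto (fun n => wn n - vn n) atTop (𝓝 0) := by
      refine squeeze_zero_norm (fun n => ?_)
        (a := fun n => Metric.infDist (xn n) R / tn n + ((n : ℝ) + 1)⁻¹) ?_
      · have htp := htnpos n
        have heq : wn n - vn n = (tn n)⁻¹ • (y n - xn n) := by
          simp only [hwn, hxn]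
          match_scalars <;> field_simp
        rw [heq, norm_smul, Real.norm_eq_abs, abs_of_pos (inv_pos.2 htp)]
        have hyn : ‖y n - xn n‖ ≤ Metric.infDist (xn n) R + tn n * ((n : ℝ) + 1)⁻¹ := by
          rw [← dist_eq_norm, dist_comm]
          exact (hyd n).le
        calc (tn n)⁻¹ * ‖y n - xn n‖
            ≤ (tn n)⁻¹ * (Metric.infDist (xn n) R + tn n * ((n : ℝ) + 1)⁻¹) :=
              mul_le_mul_of_nonneg_left hyn (inv_pos.2 htp).le
          _ = Metric.infDist (xn n) R / tn n + ((n : ℝ) + 1)⁻¹ := by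
              field_simp
      · have h2 : Tendsto (fun n : ℕ => ((n : ℝ) + 1)⁻¹) atTop (𝓝 0) := by
          simpa [one_div] using (tendsto_one_div_add_atTop_nhds_zero_nat :
            Tendsto (fun n : ℕ => 1 / ((n : ℝ) + 1)) atTop (𝓝 0))
        simpa using hdt.add h2
    have : Tendsto (fun n => (wn n - vn n) + vn n) atTop (𝓝 (0 + v)) := hsub.add hvn
    simpa using this
  exact ⟨wn, tn, hwv, htn, htnpos, fun n => by rw [hyx n]; exact hyR n⟩
end

section
/- Let X, Y, Z be real Banach spaces, K ⊆ Y a convex cone with nonempty interior, S ⊆ X a nonempty closed set, C ⊆ Z a proper closed convex cone with C ≠ {0}, f : X → Y, and G : X ⇉ Z with G(x) ≠ ∅ for all x. Let R = S ∩ {x : G(x) ⊆ C} and let x̄ ∈ R be a locally weakly efficient solution of minimizing f over R. Suppose that (i) f is B-differentiable at x̄ with B-derivative Bf(x̄;·); (ii) G is lower semicontinuous at every point of some ball around x̄ and is metrically C-increasing around x̄ relative to S; (iii) G admits a positively homogeneous set-valued mapping H as an outer prederivative at x̄. Then Bf(x̄; v) ∉ −int K for every v ∈ H⁺¹(C) ∩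 WI(S,x̄), where H⁺¹(C) = {v : H(v) ⊆ C} and WI(S,x̄) is the weak feasible direction cone. -/
open Filter Topology Metric Set Pointwise
open scoped ENNReal NNReal

private lemma coneAdd {Z : Type*} [NormedAddCommGroup Z] [NormedSpace ℝ Z]
    {C : Set Z} (hCconv : Convex ℝ C) (hCcone : ∀ t : ℝ, 0 < t → ∀ z ∈ C, t • z ∈ C)
    {a b : Z} (ha : a ∈ C) (hb : b ∈ C) : a + b ∈ C := by
  have h := hCconv ha hb (by norm_num : (0:ℝ) ≤ 1/2) (by norm_num : (0:ℝ) ≤ 1/2) (by norm_num)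
  have h2 := hCcone 2 (by norm_num) _ h
  have : (2:ℝ) • ((1/2 : ℝ) • a + (1/2 : ℝ) • b) = a + b := by
    rw [smul_add, smul_smul, smul_smul]; norm_num
  rwa [this] at h2

set_option maxHeartbeats 1000000 in
private lemma decrement {Z : Type*} [NormedAddCommGroup Z] [NormedSpace ℝ Z]
    {C : Set Z} (hCconv : Convex ℝ C) (hCcone : ∀ t : ℝ, 0 < t → ∀ z ∈ C, t • z ∈ C)
    (hC0 : (0:Z) ∈ C)
    {A A' : Set Z} (hA : A.Nonempty)
    {α r b : ℝ} (hα : 1 < α) (hr : 0 < r) (hbr : (α - 1) * r ≤ b)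
    (hbound : ∀ g ∈ A, Metric.infDist g C ≤ b)
    (hinc : enlarge A' (α * r) ⊆ enlarge (A + C) r)
    {z' : Z} (hz' : z' ∈ A') : Metric.infDist z' C ≤ b - (α - 1) * r := by
  by_contra hcon
  push_neg at hcon
  set d := Metric.infDist z' C with hd_def
  have hCne : C.Nonempty := ⟨0, hC0⟩
  have hd0 : 0 < d := lt_of_le_of_lt (by nlinarith) hcon
  have hαr : 0 < α * r := by positivity
  set γ : ℝ := d + α * r - r - b with hγ_def
  have hγ : 0 < γ := by nlinarith
  have hγd : γ ≤ d := by nlinarith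
  set η : ℝ := min (γ * d / (4 * (α * r))) (γ / 8) with hη_def
  have hη : 0 < η := lt_min (by positivity) (by positivity)
  have hη1 : 4 * (α * r) * η ≤ γ * d := by
    have h := min_le_left (γ * d / (4 * (α * r))) (γ / 8)
    rw [← hη_def] at h
    calc 4 * (α * r) * η ≤ 4 * (α * r) * (γ * d / (4 * (α * r))) := by nlinarith
      _ = γ * d := by field_simp
  have hη2 : η ≤ γ / 8 := min_le_right _ _
  obtain ⟨c₀, hc₀C, hc₀⟩ := (Metric.infDist_lt_iff hCne).mp
    (show Metric.infDist z' C < d + η by rw [← hd_def]; linarith)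
  set s := dist z' c₀ with hs_def
  have hs_ge : d ≤ s := Metric.infDist_le_dist_of_mem hc₀C
  have hs_pos : 0 < s := hd0.trans_le hs_ge
  set lam : ℝ := 1 + α * r / s with hlam_def
  have hdiv : 0 < α * r / s := div_pos hαr hs_pos
  have hlam1 : 1 < lam := by rw [hlam_def]; linarith
  have hlam0 : 0 < lam := by linarith
  set p := z' + (α * r / s) • (z' - c₀) with hp_def
  have hpz : dist p z' = α * r := by
    rw [dist_eq_norm]
    have e : p - z' = (α * r / s) • (z' - c₀) := by rw [hp_def]; abel
    rw [e, norm_smul, Real.norm_eq_abs, abs_of_pos hdiv,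
      show ‖z' - c₀‖ = s by rw [hs_def, dist_eq_norm]]
    field_simp
  have hp1 : p ∈ enlarge A' (α * r) := by
    simp only [enlarge, Set.mem_setOf_eq]
    calc Metric.infDist p A' ≤ dist p z' := Metric.infDist_le_dist_of_mem hz'
      _ = α * r := hpz
  have hp2 : Metric.infDist p (A + C) ≤ r := hinc hp1
  have hACne : (A + C).Nonempty := hA.add hCne
  obtain ⟨w, hw, hpw⟩ := (Metric.infDist_lt_iff hACne).mp
    (show Metric.infDist p (A + C) < r + η by linarith)
  obtain ⟨g, hg, c, hc, rfl⟩ := Set.mem_add.mp hw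
  obtain ⟨c₁, hc₁C, hgc₁⟩ := (Metric.infDist_lt_iff hCne).mp
    (show Metric.infDist g C < b + η from lt_of_le_of_lt (hbound g hg) (by linarith))
  have hup : Metric.infDist p C < r + b + 2 * η := by
    have hmem : c + c₁ ∈ C := coneAdd hCconv hCcone hc hc₁C
    calc Metric.infDist p C ≤ dist p (c + c₁) := Metric.infDist_le_dist_of_mem hmem
      _ ≤ dist p (g + c) + dist (g + c) (c + c₁) := dist_triangle _ _ _
      _ = dist p (g + c) + dist g c₁ := by
          congr 1
          rw [dist_eq_norm, dist_eq_norm]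
          congr 1
          abel
      _ < (r + η) + (b + η) := add_lt_add hpw hgc₁
      _ = r + b + 2 * η := by ring
  have hlow : ∀ c' ∈ C, lam * d ≤ dist p c' := by
    intro c' hc'
    set q := lam⁻¹ • c' + (1 - lam⁻¹) • c₀ with hq_def
    have hqC : q ∈ C := hCconv hc' hc₀C (by positivity)
      (by rw [sub_nonneg]; exact inv_le_one_of_one_le₀ hlam1.le) (by ring)
    have hkey : lam • (z' - q) = p - c' := by
      rw [hq_def, hp_def, hlam_def]
      match_scalars <;> field_simp <;> ring_nf
    have hdq : d ≤ dist z' q := Metric.infDist_le_dist_of_mem hqC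
    have hnorm : lam * dist z' q = dist p c' := by
      rw [dist_eq_norm, dist_eq_norm, ← hkey, norm_smul, Real.norm_eq_abs, abs_of_pos hlam0]
    calc lam * d ≤ lam * dist z' q := by nlinarith
      _ = dist p c' := hnorm
  have hlow' : lam * d ≤ Metric.infDist p C := by
    by_contra hlt
    push_neg at hlt
    obtain ⟨c', hc', hdc'⟩ := (Metric.infDist_lt_iff hCne).mp hlt
    exact absurd (hlow c' hc') (by linarith)
  have hcomb : lam * d < r + b + 2 * η := lt_of_le_of_lt hlow' hup
  have hsd : d * s + α * r * d < (r + b + 2 * η) * s := by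
    have h1 := mul_lt_mul_of_pos_right hcomb hs_pos
    have e : lam * d * s = d * s + α * r * d := by
      rw [hlam_def]; field_simp
    linarith [e ▸ h1]
  have h2 : (r + b + 2 * η) * s ≤ (r + b + 2 * η) * (d + η) := by
    have hb0 : 0 < b := lt_of_lt_of_le (mul_pos (by linarith) hr) hbr
    apply mul_le_mul_of_nonneg_left hc₀.le (by linarith)
  have h3 : d * d ≤ d * s := by nlinarith
  have key : d * d + α * r * d < (r + b + 2 * η) * (d + η) := by linarith
  nlinarith [key, hη1, mul_le_mul_of_nonneg_right hη2 hd0.le,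
    mul_le_mul_of_nonneg_right hη2 hη.le, mul_le_mul_of_nonneg_right hγd hη.le,
    mul_le_mul_of_nonneg_left hγd hγ.le, mul_pos hγ hη, mul_pos hγ hd0]

set_option maxHeartbeats 1000000 in
private lemma errorBound {X Z : Type*} [NormedAddCommGroup X] [NormedSpace ℝ X] [CompleteSpace X]
    [NormedAddCommGroup Z] [NormedSpace ℝ Z]
    {S : Set X} (hScl : IsClosed S) {C : Set Z} (hCcl : IsClosed C) (hCconv : Convex ℝ C)
    (hCcone : ∀ t : ℝ, 0 < t → ∀ z ∈ C, t • z ∈ C) (hC0 : (0:Z) ∈ C)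
    {G : X → Set Z} (hG : ∀ x, (G x).Nonempty) {xb : X}
    {α δ ρ : ℝ} (hα : 1 < α) (hδ : 0 < δ) (hmi : MetIncrWith G S C xb α δ)
    (hρ : 0 < ρ) (hlsc : ∀ x ∈ Metric.closedBall xb ρ, LscAt G x)
    {x₀ : X} (hx₀S : x₀ ∈ S) {b : ℝ} (hb : 0 < b)
    (hbound : ∀ z ∈ G x₀, Metric.infDist z C ≤ b)
    (hfit : ‖x₀ - xb‖ + b / (α - 1) ≤ min δ ρ) :
    ∃ y ∈ S, G y ⊆ C ∧ dist y x₀ ≤ b / (α - 1) := by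
  have hα1 : 0 < α - 1 := by linarith
  set Inv : ℕ → X → Prop := fun k x => x ∈ S ∧
    ‖x - xb‖ + (b / 2 ^ k) / (α - 1) ≤ min δ ρ ∧
    ∀ z ∈ G x, Metric.infDist z C ≤ b / 2 ^ k with hInv_def
  have hbk : ∀ k : ℕ, 0 < b / 2 ^ k := fun k => by positivity
  have hstep : ∀ (k : ℕ) (x : X), Inv k x →
      ∃ x', Inv (k + 1) x' ∧ dist x' x ≤ (b / 2 ^ k) / (2 * (α - 1)) := by
    intro k x hx
    obtain ⟨hxS, hxnorm, hxbound⟩ := hx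
    set bk := b / 2 ^ k with hbk_def
    set r := bk / (2 * (α - 1)) with hr_def
    have hr0 : 0 < r := by positivity
    have hrδ : r < δ := by
      have h1 : r < bk / (α - 1) := by
        rw [hr_def, div_lt_div_iff₀ (by linarith) hα1]
        nlinarith [hbk k]
      have h2 : bk / (α - 1) ≤ min δ ρ := by
        have := norm_nonneg (x - xb); linarith
      exact lt_of_lt_of_le h1 (h2.trans (min_le_left _ _))
    have hxball : x ∈ Metric.closedBall xb δ := by
      rw [Metric.mem_closedBall, dist_eq_norm]
      have := (hbk k); have h2 : (b / 2 ^ k) / (α - 1) > 0 := by positivity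
      linarith [min_le_left δ ρ]
    obtain ⟨z, ⟨hzball, hzS⟩, hzinc⟩ := hmi x ⟨hxball, hxS⟩ r ⟨hr0, hrδ⟩
    have hbr : (α - 1) * r ≤ bk := by
      rw [hr_def]; rw [mul_div_assoc']; rw [div_le_iff₀ (by linarith)]
      nlinarith [hbk k]
    have hdec : ∀ z' ∈ G z, Metric.infDist z' C ≤ bk - (α - 1) * r :=
      fun z' hz' => decrement hCconv hCcone hC0 (hG x) hα hr0 hbr hxbound hzinc hz'
    have hhalf : bk - (α - 1) * r = b / 2 ^ (k + 1) := by
      rw [hr_def, hbk_def, pow_succ]; field_simp; ring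
    refine ⟨z, ⟨hzS, ?_, fun z' hz' => hhalf ▸ hdec z' hz'⟩, ?_⟩
    · have hzx : ‖z - x‖ ≤ r := by
        rw [← dist_eq_norm]; exact Metric.mem_closedBall.mp hzball
      have htri : ‖z - xb‖ ≤ ‖z - x‖ + ‖x - xb‖ := norm_sub_le_norm_sub_add_norm_sub _ _ _
      have e1 : (b / 2 ^ (k + 1)) / (α - 1) = r := by
        rw [hr_def, hbk_def, pow_succ, div_div, div_div,
          div_eq_div_iff (by positivity) (by positivity)]; ring
      have e2 : bk / (α - 1) = 2 * r := by
        rw [hr_def]; field_simp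
      rw [e1]; linarith
    · rw [dist_eq_norm]
      calc ‖z - x‖ = dist z x := (dist_eq_norm _ _).symm
        _ ≤ r := Metric.mem_closedBall.mp hzball
  choose! F hF1 hF2 using hstep
  set u : ℕ → X := fun k => Nat.rec x₀ (fun k x => F k x) k with hu_def
  have hu0 : u 0 = x₀ := rfl
  have husucc : ∀ k, u (k + 1) = F k (u k) := fun k => rfl
  have hInv0 : Inv 0 x₀ := ⟨hx₀S, by simpa using hfit, by simpa using hbound⟩
  have hInvk : ∀ k, Inv k (u k) := by
    intro k
    induction k with
    | zero => exact hInv0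
    | succ k ih => rw [husucc]; exact hF1 k (u k) ih
  have hdist : ∀ k, dist (u k) (u (k + 1)) ≤ (b / (2 * (α - 1))) * (1 / 2) ^ k := by
    intro k
    rw [dist_comm, husucc]
    have := hF2 k (u k) (hInvk k)
    calc dist (F k (u k)) (u k) ≤ (b / 2 ^ k) / (2 * (α - 1)) := this
      _ = (b / (2 * (α - 1))) * (1 / 2) ^ k := by
        rw [div_pow, one_pow, div_div, div_mul_div_comm,
          div_eq_div_iff (by positivity) (by positivity)]; ring
  have hcauchy : CauchySeq u :=
    cauchySeq_of_le_geometric (1/2) (b / (2 * (α - 1))) (by norm_num) hdist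
  obtain ⟨y, hy⟩ := cauchySeq_tendsto_of_complete hcauchy
  have hd0 : dist x₀ y ≤ (b / (2 * (α - 1))) / (1 - 1/2) := by
    have := dist_le_of_le_geometric_of_tendsto₀ (1/2) (b / (2 * (α - 1))) (by norm_num) hdist hy
    simpa [hu0] using this
  have hd0' : dist x₀ y ≤ b / (α - 1) := by
    have e : (b / (2 * (α - 1))) / (1 - 1/2 : ℝ) = b / (α - 1) := by
      field_simp; ring
    linarith [e ▸ hd0]
  have hyS : y ∈ S := hScl.mem_of_tendsto hy (Filter.Eventually.of_forall fun k => (hInvk k).1)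
  have hyρ : y ∈ Metric.closedBall xb ρ := by
    rw [Metric.mem_closedBall]
    have h1 : dist y xb ≤ dist y x₀ + dist x₀ xb := dist_triangle _ _ _
    have h2 : dist x₀ xb = ‖x₀ - xb‖ := dist_eq_norm _ _
    have h3 : (b / 2 ^ 0) / (α - 1) = b / (α - 1) := by norm_num
    have h4 := (hInvk 0).2.1
    rw [hu0] at h4  -- no-op
    rw [dist_comm] at hd0'
    have := min_le_right δ ρ
    simp only [pow_zero, div_one] at h4
    linarith
  have hyC : G y ⊆ C := by
    intro z hz
    have hz0 : Metric.infDist z C ≤ 0 := by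
      by_contra hpos
      push_neg at hpos
      set V : Set Z := {w | Metric.infDist z C / 2 < Metric.infDist w C} with hV_def
      have hVopen : IsOpen V := isOpen_lt continuous_const (continuous_infDist_pt C)
      have hzV : z ∈ V := by simp only [hV_def, Set.mem_setOf_eq]; linarith
      obtain ⟨U, hU, hUall⟩ := hlsc y hyρ V hVopen ⟨z, hz, hzV⟩
      have hev1 : ∀ᶠ k in atTop, u k ∈ U := hy.eventually_mem hU
      have htend : Tendsto (fun k : ℕ => b / 2 ^ k) atTop (nhds 0) := by
        have h := tendsto_pow_atTop_nhds_zero_of_lt_one (by norm_num : (0:ℝ) ≤ 1/2)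
          (by norm_num : (1:ℝ)/2 < 1)
        have := h.const_mul b
        simpa [div_pow, mul_comm, div_eq_mul_inv, inv_pow] using this
      have hev2 : ∀ᶠ k in atTop, b / 2 ^ k < Metric.infDist z C / 2 :=
        htend.eventually (gt_mem_nhds (by linarith))
      obtain ⟨k, hkU, hklt⟩ := (hev1.and hev2).exists
      obtain ⟨w, hwG, hwV⟩ := hUall (u k) hkU
      have := (hInvk k).2.2 w hwG
      simp only [hV_def, Set.mem_setOf_eq] at hwV
      linarith
    have : Metric.infDist z C = 0 := le_antisymm hz0 Metric.infDist_nonneg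
    exact (hCcl.mem_iff_infDist_zero ⟨0, hC0⟩).mpr this
  exact ⟨y, hyS, hyC, by rwa [dist_comm]⟩

set_option maxHeartbeats 1000000 in
/-- primal first-order necessary condition for local weak efficiency. -/
theorem statement_10
    {X Y Z : Type*} [NormedAddCommGroup X] [NormedSpace ℝ X] [CompleteSpace X]
    [NormedAddCommGroup Y] [NormedSpace ℝ Y] [CompleteSpace Y]
    [NormedAddCommGroup Z] [NormedSpace ℝ Z] [CompleteSpace Z]
    (K : Set Y) (hKconv : Convex ℝ K)
    (hKcone : ∀ t : ℝ, 0 < t → ∀ y ∈ K, t • y ∈ K) (hKint : (interior K).Nonempty)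
    (S : Set X) (hSne : S.Nonempty) (hScl : IsClosed S)
    (C : Set Z) (hCcl : IsClosed C) (hCconv : Convex ℝ C)
    (hCcone : ∀ t : ℝ, 0 < t → ∀ z ∈ C, t • z ∈ C) (hC0 : (0:Z) ∈ C)
    (hCne0 : C ≠ {0}) (hCneuniv : C ≠ Set.univ)
    (f : X → Y) (G : X → Set Z) (hG : ∀ x, (G x).Nonempty)
    (xb : X) (hxbS : xb ∈ S) (hxbG : G xb ⊆ C)
    (hweff : LocWeakEffOn f (S ∩ {x | G x ⊆ C}) K xb)
    (Bf : X → Y) (hBf : IsBDerivAt f Bf xb)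
    (hlsc : LscAround G xb) (hmi : MetIncr G S C xb)
    (H : X → Set Z) (hH : OuterPrederivAt G H xb) :
    ∀ v ∈ upperInv H C ∩ weakFeasDirCone S xb, -Bf v ∉ interior K := by
  rintro v ⟨hvH, hvW⟩ hcontra
  simp only [upperInv, Set.mem_setOf_eq] at hvH
  simp only [weakFeasDirCone, Set.mem_setOf_eq] at hvW
  obtain ⟨hBfc, hBfh, hBft⟩ := hBf
  have hBf0 : Bf 0 = 0 := by
    have h2 := hBfh 2 (by norm_num) 0
    rw [smul_zero] at h2
    have h3 : (2:ℝ) • Bf 0 - Bf 0 = Bf 0 := by rw [two_smul]; abel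
    rw [← h2, sub_self] at h3
    exact h3.symm
  obtain ⟨δw, hδw, hweffP⟩ := hweff
  have hK0 : (0:Y) ∉ interior K := by
    have := hweffP xb ⟨⟨hxbS, hxbG⟩, Metric.mem_closedBall_self hδw.le⟩
    simpa using this
  rcases eq_or_ne v 0 with rfl | hv
  · exact hK0 (by simpa [hBf0] using hcontra)
  have hvn : 0 < ‖v‖ := norm_pos_iff.mpr hv
  obtain ⟨η, hη, hball⟩ := Metric.isOpen_iff.mp isOpen_interior _ hcontra
  set η' := η / (3 * (‖v‖ + 1)) with hη'_def
  have hη' : 0 < η' := by positivity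
  rw [Metric.tendsto_nhdsWithin_nhds] at hBft
  obtain ⟨δB', hδB', hrem'⟩ := hBft η' hη'
  set δB := δB' / 2 with hδB_def
  have hδB : 0 < δB := by positivity
  have hrem : ∀ x : X, ‖x - xb‖ ≤ δB → ‖f x - f xb - Bf (x - xb)‖ ≤ η' * ‖x - xb‖ := by
    intro x hx
    rcases eq_or_ne x xb with rfl | hne
    · simp [hBf0]
    · have h := hrem' (Set.mem_compl_singleton_iff.mpr hne)
        (by rw [dist_eq_norm]; rw [hδB_def] at hx; linarith)
      rw [dist_zero_right, norm_smul, norm_inv, norm_norm] at h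
      have hxn : 0 < ‖x - xb‖ := by rw [norm_pos_iff, sub_ne_zero]; exact hne
      have h2 := mul_le_mul_of_nonneg_left h.le hxn.le
      calc ‖f x - f xb - Bf (x - xb)‖
          = ‖x - xb‖ * (‖x - xb‖⁻¹ * ‖f x - f xb - Bf (x - xb)‖) := by
            rw [← mul_assoc, mul_inv_cancel₀ hxn.ne', one_mul]
        _ ≤ ‖x - xb‖ * η' := h2
        _ = η' * ‖x - xb‖ := mul_comm _ _
  obtain ⟨σ₀, hσ₀, hcont⟩ := Metric.tendsto_nhds_nhds.mp (hBfc.tendsto v) (η/3) (by positivity)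
  set σ := min (σ₀ / 2) 1 with hσ_def
  have hσ : 0 < σ := lt_min (by positivity) one_pos
  have hσ1 : σ ≤ 1 := min_le_right _ _
  have hσσ₀ : σ < σ₀ := lt_of_le_of_lt (min_le_left _ _) (by linarith)
  obtain ⟨α, hα, δm, hδm, hmiW⟩ := hmi
  obtain ⟨ρ, hρ, hlscB⟩ := hlsc
  have hα1 : 0 < α - 1 := by linarith
  set ε' := σ * (α - 1) / ‖v‖ with hε'_def
  have hε' : 0 < ε' := by positivity
  obtain ⟨δH, hδH, hpred⟩ := hH.2 ε' hε'
  set Δ := min δm (min ρ (min δw δB)) with hΔ_def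
  have hΔ : 0 < Δ := lt_min hδm (lt_min hρ (lt_min hδw hδB))
  set T := min (δH / ‖v‖) (Δ / (‖v‖ + 1)) with hT_def
  have hT : 0 < T := lt_min (by positivity) (by positivity)
  obtain ⟨t, ⟨ht0, htT⟩, htS⟩ := hvW T hT
  set x₀ := xb + t • v with hx₀_def
  have hx₀xb : x₀ - xb = t • v := by rw [hx₀_def]; abel
  have hx₀n : ‖x₀ - xb‖ = t * ‖v‖ := by
    rw [hx₀xb, norm_smul, Real.norm_eq_abs, abs_of_pos ht0]
  set b₀ := ε' * (t * ‖v‖) with hb₀_def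
  have hb₀ : 0 < b₀ := by positivity
  have httv : t * ‖v‖ ≤ δH := by
    have h1 : t ≤ δH / ‖v‖ := le_of_lt (lt_of_lt_of_le htT (min_le_left _ _))
    rw [← le_div_iff₀ hvn]
    exact h1
  have htΔ : t * (‖v‖ + 1) ≤ Δ := by
    have h1 : t ≤ Δ / (‖v‖ + 1) := le_of_lt (lt_of_lt_of_le htT (min_le_right _ _))
    rw [← le_div_iff₀ (by positivity : (0:ℝ) < ‖v‖ + 1)]
    exact h1
  have hbound : ∀ z ∈ G x₀, Metric.infDist z C ≤ b₀ := by
    intro z hz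
    have hx₀ball : x₀ ∈ Metric.closedBall xb δH := by
      rw [Metric.mem_closedBall, dist_eq_norm, hx₀n]; exact httv
    have hmem := hpred x₀ hx₀ball hz
    rw [hx₀xb] at hmem
    obtain ⟨w₁, hw₁, w₂, hw₂, rfl⟩ := Set.mem_add.mp hmem
    obtain ⟨g, hg, h, hh, rfl⟩ := Set.mem_add.mp hw₁
    have hhC : h ∈ C := by
      rw [hH.1 t ht0 v] at hh
      obtain ⟨h', hh', rfl⟩ := hh
      exact hCcone t ht0 h' (hvH hh')
    have hghC : g + h ∈ C := coneAdd hCconv hCcone (hxbG hg) hhC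
    have hw₂n : ‖w₂‖ ≤ ε' * ‖t • v‖ := mem_closedBall_zero_iff.mp hw₂
    calc Metric.infDist (g + h + w₂) C ≤ dist (g + h + w₂) (g + h) :=
        Metric.infDist_le_dist_of_mem hghC
      _ = ‖w₂‖ := by rw [dist_eq_norm]; congr 1; abel
      _ ≤ ε' * ‖t • v‖ := hw₂n
      _ = b₀ := by rw [hb₀_def, norm_smul, Real.norm_eq_abs, abs_of_pos ht0]
  have hb₀div : b₀ / (α - 1) = σ * t := by
    rw [hb₀_def, hε'_def, div_mul_eq_mul_div, div_div,
      div_eq_iff (by positivity : ‖v‖ * (α - 1) ≠ 0)]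
    ring
  have hfit : ‖x₀ - xb‖ + b₀ / (α - 1) ≤ min δm ρ := by
    rw [hx₀n, hb₀div]
    have h1 : t * ‖v‖ + σ * t ≤ t * (‖v‖ + 1) := by nlinarith
    have h2 : Δ ≤ min δm ρ := by
      rw [hΔ_def]
      exact le_min (min_le_left _ _) ((min_le_right _ _).trans (min_le_left _ _))
    linarith
  obtain ⟨y, hyS, hyGC, hydist⟩ := errorBound hScl hCcl hCconv hCcone hC0 hG hα hδm hmiW hρ
    hlscB htS hb₀ hbound hfit
  have hydist' : dist y x₀ ≤ σ * t := hb₀div ▸ hydist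
  have hyxbn : ‖y - xb‖ ≤ t * (‖v‖ + 1) := by
    have h1 : ‖y - xb‖ ≤ ‖y - x₀‖ + ‖x₀ - xb‖ := norm_sub_le_norm_sub_add_norm_sub _ _ _
    have h2 : ‖y - x₀‖ = dist y x₀ := (dist_eq_norm _ _).symm
    rw [hx₀n] at h1
    nlinarith [hydist', hσ1, ht0.le]
  have hyδw : y ∈ Metric.closedBall xb δw := by
    rw [Metric.mem_closedBall, dist_eq_norm]
    have hle : Δ ≤ δw := (min_le_right _ _).trans ((min_le_right _ _).trans (min_le_left _ _))
    linarith
  have hyδB : ‖y - xb‖ ≤ δB := by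
    have hle : Δ ≤ δB := (min_le_right _ _).trans ((min_le_right _ _).trans (min_le_right _ _))
    linarith
  set u₁ := t⁻¹ • (y - xb) with hu₁_def
  have hyxb : y - xb = t • u₁ := (smul_inv_smul₀ ht0.ne' _).symm
  have hu₁v : u₁ - v = t⁻¹ • (y - x₀) := by
    rw [hu₁_def, hx₀_def, show y - (xb + t • v) = (y - xb) - t • v by abel,
      smul_sub t⁻¹ (y - xb) (t • v), inv_smul_smul₀ ht0.ne']
  have hu₁vn : ‖u₁ - v‖ ≤ σ := by
    rw [hu₁v, norm_smul, norm_inv, Real.norm_eq_abs, abs_of_pos ht0,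
      show ‖y - x₀‖ = dist y x₀ from (dist_eq_norm _ _).symm]
    calc t⁻¹ * dist y x₀ ≤ t⁻¹ * (σ * t) :=
        mul_le_mul_of_nonneg_left hydist' (by positivity)
      _ = σ := by
        rw [mul_comm σ t, ← mul_assoc, inv_mul_cancel₀ ht0.ne', one_mul]
  have hBfu₁ : dist (Bf u₁) (Bf v) < η / 3 := hcont
    (by rw [dist_eq_norm]; exact lt_of_le_of_lt hu₁vn hσσ₀)
  have hrrn : ‖f y - f xb - Bf (y - xb)‖ ≤ η' * ‖y - xb‖ := hrem y hyδB
  have hw2 : t⁻¹ • (f xb - f y) + Bf v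
      = (Bf v - Bf u₁) - t⁻¹ • (f y - f xb - Bf (y - xb)) := by
    rw [hyxb, hBfh t ht0]
    simp only [smul_sub, smul_smul, inv_mul_cancel₀ ht0.ne', one_smul]
    abel
  have hη'3 : η' * (‖v‖ + 1) = η / 3 := by
    rw [hη'_def, div_mul_eq_mul_div, mul_comm (3:ℝ) (‖v‖ + 1), ← div_div,
      mul_div_assoc, div_self (by positivity : (‖v‖ + 1 : ℝ) ≠ 0), mul_one]
  have hwK : t⁻¹ • (f xb - f y) ∈ interior K := by
    apply hball
    rw [Metric.mem_ball, dist_eq_norm, sub_neg_eq_add]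
    calc ‖t⁻¹ • (f xb - f y) + Bf v‖
        = ‖(Bf v - Bf u₁) - t⁻¹ • (f y - f xb - Bf (y - xb))‖ := by rw [hw2]
      _ ≤ ‖Bf v - Bf u₁‖ + ‖t⁻¹ • (f y - f xb - Bf (y - xb))‖ := norm_sub_le _ _
      _ < η/3 + η/3 := by
          apply add_lt_add_of_lt_of_le
          · rw [norm_sub_rev, ← dist_eq_norm]; exact hBfu₁
          · rw [norm_smul, norm_inv, Real.norm_eq_abs, abs_of_pos ht0]
            calc t⁻¹ * ‖f y - f xb - Bf (y - xb)‖
                ≤ t⁻¹ * (η' * (t * (‖v‖ + 1))) := by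
                  apply mul_le_mul_of_nonneg_left _ (by positivity)
                  exact hrrn.trans (mul_le_mul_of_nonneg_left hyxbn hη'.le)
              _ = η' * (‖v‖ + 1) := by
                  rw [show η' * (t * (‖v‖ + 1)) = t * (η' * (‖v‖ + 1)) by ring,
                    ← mul_assoc, inv_mul_cancel₀ ht0.ne', one_mul]
              _ = η/3 := hη'3
      _ < η := by linarith
  have hfinal : f xb - f y ∈ interior K := by
    rw [show f xb - f y = t • (t⁻¹ • (f xb - f y)) from (smul_inv_smul₀ ht0.ne' _).symm]
    have h1 : t • (t⁻¹ • (f xb - f y)) ∈ t • interior K := Set.smul_mem_smul_set hwK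
    rw [← interior_smul₀ ht0.ne' K] at h1
    have h2 : t • K ⊆ K := by
      rintro _ ⟨k, hk, rfl⟩
      exact hKcone t ht0 k hk
    exact interior_mono h2 h1
  exact hweffP y ⟨⟨hyS, hyGC⟩, hyδw⟩ hfinal
end

section
/- Let X, Y, Z be real Banach spaces, K ⊆ Y a convex cone with nonempty interior, S ⊆ X a nonempty closed set, C ⊆ Z a proper closed convex cone with C ≠ {0}, f : X → Y, and G : X ⇉ Z with G(x) ≠ ∅ for all x. Let R = S ∩ {x : G(x) ⊆ C} and let x̄ ∈ R be a locally weakly efficient solution of minimizing f over R. Suppose that (i) f is B-differentiable at x̄; (ii) G is lower semicontinuous at every point of some ball around x̄ and metrically C-increasing around x̄ relative to S; (iii) G admits a positively homogeneous set-valued mapping H as an outer prederivative at x̄; (iv) Bf(x̄;·) is K-convexlike on the set H⁺¹(C) ∩ T(S,x̄); (v) H(0) ⊆ C; (vi) H is Lipschitz with respect to the Hausdorff distance. Then there exists y* ∈ K⁺ \ {0} such that ⟨y*, Bf(x̄;v)⟩ ≥ 0 for all v ∈ H⁺¹(C) ∩ T(S,x̄). -/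
open Filter Topology Metric Set Pointwise
open scoped ENNReal NNReal

section AuxProofs

open Metric

variable {Z : Type*} [NormedAddCommGroup Z] [NormedSpace ℝ Z]

lemma aux_infDist_add_left_le {C : Set Z} (hCne : C.Nonempty)
    (hadd : ∀ a ∈ C, ∀ b ∈ C, a + b ∈ C) {g : Z} (hg : g ∈ C) (z : Z) :
    infDist (g + z) C ≤ infDist z C := by
  have himg : (fun c => g + c) '' C ⊆ C := by
    rintro _ ⟨c, hc, rfl⟩
    exact hadd g hg c hc
  calc infDist (g + z) C ≤ infDist (g + z) ((fun c => g + c) '' C) :=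
        infDist_le_infDist_of_subset himg (hCne.image _)
    _ = infDist z C := infDist_image (isometry_add_left g)

lemma aux_infDist_smul_le {C : Set Z} (hCne : C.Nonempty)
    (hcone : ∀ t : ℝ, 0 < t → ∀ z ∈ C, t • z ∈ C) {t : ℝ} (ht : 0 < t) (z : Z) :
    infDist (t • z) C ≤ t * infDist z C := by
  apply le_of_forall_pos_le_add
  intro ε hε
  obtain ⟨c, hc, hdist⟩ := (infDist_lt_iff hCne).1
    (lt_add_of_pos_right (infDist z C) (div_pos hε ht))
  calc infDist (t • z) C ≤ dist (t • z) (t • c) := infDist_le_dist_of_mem (hcone t ht c hc)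
    _ = t * dist z c := by rw [dist_smul₀, Real.norm_of_nonneg ht.le]
    _ ≤ t * (infDist z C + ε / t) := by nlinarith [dist_nonneg (x := z) (y := c)]
    _ = t * infDist z C + ε := by field_simp; try ring

lemma aux_decrease {C : Set Z} (hCconv : Convex ℝ C) (hC0 : (0:Z) ∈ C)
    (hadd : ∀ a ∈ C, ∀ b ∈ C, a + b ∈ C)
    {A B' : Set Z} (hA : A.Nonempty) {α r s : ℝ} (hα : 1 < α) (hr : 0 < r)
    (hsr : (α - 1) * r ≤ s)
    (hsub : enlarge B' (α * r) ⊆ enlarge (A + C) r)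
    (hAb : ∀ g ∈ A, infDist g C ≤ s) :
    ∀ w ∈ B', infDist w C ≤ s - (α - 1) * r := by
  intro w hw
  have hCne : C.Nonempty := ⟨0, hC0⟩
  have hACne : (A + C).Nonempty := hA.add hCne
  set d := infDist w C with hd
  have hd0 : 0 ≤ d := infDist_nonneg
  have hαr : 0 < α * r := by nlinarith
  have hs0 : 0 ≤ s := le_trans (by nlinarith) hsr
  have key : ∀ ε : ℝ, 0 < ε → (d + α * r) * d ≤ (s + r + ε) * (d + ε) := by
    intro ε hε
    rcases eq_or_lt_of_le hd0 with h0 | hdpos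
    · nlinarith [mul_pos (show (0:ℝ) < s + r + ε by linarith) hε]
    obtain ⟨c, hc, hdistc⟩ := (infDist_lt_iff hCne).1 (lt_add_of_pos_right d hε)
    set n := dist w c with hn
    have hdn : d ≤ n := infDist_le_dist_of_mem hc
    have hnd : n < d + ε := hdistc
    have hnpos : 0 < n := lt_of_lt_of_le hdpos hdn
    set t := 1 + α * r / n with htdef
    have ht1 : 1 ≤ t := by
      rw [htdef]
      have h0 : 0 < α * r / n := by positivity
      linarith
    have htpos : 0 < t := by linarith
    have htne : t ≠ 0 := ne_of_gt htpos
    set p := c + t • (w - c) with hp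
    have hpB : infDist p B' ≤ α * r := by
      have h1 : p - w = (t - 1) • (w - c) := by
        rw [hp, sub_smul, one_smul]
        abel
      have h2 : dist p w = α * r := by
        rw [dist_eq_norm, h1, norm_smul, Real.norm_of_nonneg (by linarith)]
        rw [show ‖w - c‖ = n by rw [hn, dist_eq_norm], htdef]
        field_simp
        ring
      calc infDist p B' ≤ dist p w := infDist_le_dist_of_mem hw
        _ = α * r := h2
    have hpAC : infDist p (A + C) ≤ r := hsub hpB
    obtain ⟨q, hq, hdistpq⟩ := (infDist_lt_iff hACne).1
      (lt_of_le_of_lt hpAC (lt_add_of_pos_right r hε))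
    obtain ⟨g, hg, c', hc', rfl⟩ := Set.mem_add.1 hq
    have hupper : infDist p C ≤ s + r + ε := by
      have h1 : infDist (g + c') C ≤ infDist g C := by
        rw [add_comm]
        exact aux_infDist_add_left_le hCne hadd hc' g
      have h2 : infDist p C ≤ infDist (g + c') C + dist p (g + c') :=
        infDist_le_infDist_add_dist
      have h3 := hAb g hg
      linarith
    have hlower : t * d ≤ infDist p C := by
      by_contra hcon
      push_neg at hcon
      obtain ⟨c'', hc'', hdc''⟩ := (infDist_lt_iff hCne).1 hcon
      have hm : (1 - t⁻¹) • c + t⁻¹ • c'' ∈ C := by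
        apply hCconv hc hc''
        · have : t⁻¹ ≤ 1 := by
            rw [inv_le_one_iff₀]; right; exact ht1
          linarith
        · positivity
        · ring
      have heq : t • (w - ((1 - t⁻¹) • c + t⁻¹ • c'')) = p - c'' := by
        rw [hp]
        match_scalars <;> first | ring1 | (field_simp; try ring1)
      have hge : t * d ≤ dist p c'' := by
        have hdm : d ≤ ‖w - ((1 - t⁻¹) • c + t⁻¹ • c'')‖ := by
          rw [← dist_eq_norm]
          exact infDist_le_dist_of_mem hm
        rw [dist_eq_norm, ← heq, norm_smul, Real.norm_of_nonneg htpos.le]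
        exact mul_le_mul_of_nonneg_left hdm htpos.le
      linarith
    have hcomb : t * d ≤ s + r + ε := le_trans hlower hupper
    have h2 : (d + α * r) * d ≤ (t * d) * n := by
      have ht' : t * n = n + α * r := by rw [htdef]; field_simp
      have e1 : (t * d) * n = (n + α * r) * d := by rw [← ht']; ring
      have e2 : d * d ≤ n * d := mul_le_mul_of_nonneg_right hdn hd0
      rw [e1]
      linarith [e2]
    have h4 : (t * d) * n ≤ (s + r + ε) * n := mul_le_mul_of_nonneg_right hcomb hnpos.le
    have h5 : (s + r + ε) * n ≤ (s + r + ε) * (d + ε) :=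
      mul_le_mul_of_nonneg_left hnd.le (by linarith)
    linarith
  rcases eq_or_lt_of_le hd0 with h0 | hdpos
  · rw [← h0]; linarith
  have hlim : (d + α * r) * d ≤ (s + r) * d := by
    have hc : Continuous (fun ε : ℝ => (s + r + ε) * (d + ε)) := by continuity
    have hT : Filter.Tendsto (fun ε : ℝ => (s + r + ε) * (d + ε))
        (nhdsWithin 0 (Set.Ioi 0)) (nhds ((s + r) * d)) := by
      have h1 := (hc.tendsto 0).mono_left (nhdsWithin_le_nhds (s := Set.Ioi (0:ℝ)))
      simpa using h1
    refine ge_of_tendsto hT ?_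
    filter_upwards [self_mem_nhdsWithin] with ε hε
    exact key ε hε
  have := le_of_mul_le_mul_right hlim hdpos
  linarith

set_option maxHeartbeats 1600000 in
lemma reach_feasible {X : Type*} [NormedAddCommGroup X] [NormedSpace ℝ X] [CompleteSpace X]
    {G : X → Set Z} {S : Set X} {C : Set Z} {xb : X} {α δ ρ : ℝ}
    (hScl : IsClosed S) (hG : ∀ x, (G x).Nonempty)
    (hCcl : IsClosed C) (hCconv : Convex ℝ C) (hC0 : (0:Z) ∈ C)
    (hadd : ∀ a ∈ C, ∀ b ∈ C, a + b ∈ C)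
    (hα : 1 < α) (hδ : 0 < δ) (hmi : MetIncrWith G S C xb α δ)
    (hρ : 0 < ρ) (hlsc : ∀ x ∈ Metric.closedBall xb ρ, LscAt G x)
    {x₀ : X} (hx₀S : x₀ ∈ S) {s₀ : ℝ} (hs₀ : 0 < s₀)
    (hreach : ‖x₀ - xb‖ + s₀ / (α - 1) ≤ min δ ρ)
    (hbound : ∀ g ∈ G x₀, infDist g C ≤ s₀) :
    ∃ x', x' ∈ S ∧ G x' ⊆ C ∧ ‖x' - x₀‖ ≤ s₀ / (α - 1) := by
  have hβ : 0 < α - 1 := by linarith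
  have hx₀0 : 0 ≤ ‖x₀ - xb‖ := norm_nonneg _
  have hsβ : 0 < s₀ / (α - 1) := by positivity
  let P : ℕ → X → Prop := fun k y =>
    y ∈ S ∧ ‖y - x₀‖ ≤ s₀ / (α - 1) * (1 - (2⁻¹ : ℝ) ^ k) ∧
      ∀ g ∈ G y, infDist g C ≤ s₀ * (2⁻¹ : ℝ) ^ k
  have hqk : ∀ k : ℕ, (0:ℝ) < (2⁻¹ : ℝ) ^ k ∧ ((2⁻¹ : ℝ) ^ k : ℝ) ≤ 1 :=
    fun k => ⟨by positivity, pow_le_one₀ (by norm_num) (by norm_num)⟩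
  have step : ∀ k, ∀ y : X, P k y → ∃ z, P (k+1) z ∧
      ‖z - y‖ ≤ s₀ / (α - 1) * (2⁻¹ : ℝ) ^ (k+1) := by
    intro k y ⟨hyS, hyd, hyb⟩
    have hqk1 := hqk k
    have hqk2 := hqk (k+1)
    set r := s₀ * (2⁻¹ : ℝ) ^ (k+1) / (α - 1) with hrdef
    have hr0 : 0 < r := by positivity
    have hrs : r ≤ s₀ / (α - 1) := by
      rw [hrdef, div_le_div_iff₀ hβ hβ]
      have h1 : s₀ * (2⁻¹:ℝ)^(k+1) ≤ s₀ * 1 := mul_le_mul_of_nonneg_left hqk2.2 hs₀.le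
      have h2 := mul_le_mul_of_nonneg_right h1 hβ.le
      linarith [h2]
    have hrδ : r < δ := by
      have h1 : s₀ / (α - 1) ≤ min δ ρ := by linarith
      have h2 : (2⁻¹:ℝ)^(k+1) < 1 := by
        have := hqk k
        calc (2⁻¹:ℝ)^(k+1) = 2⁻¹ * (2⁻¹:ℝ)^k := by ring
          _ ≤ 2⁻¹ := by nlinarith
          _ < 1 := by norm_num
      have h3 : r < s₀ / (α - 1) := by
        rw [hrdef, div_lt_div_iff₀ hβ hβ]
        have h1 : s₀ * (2⁻¹:ℝ)^(k+1) < s₀ * 1 := by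
          exact mul_lt_mul_of_pos_left h2 hs₀
        have h2' := mul_lt_mul_of_pos_right h1 hβ
        linarith [h2']
      calc r < s₀ / (α - 1) := h3
        _ ≤ min δ ρ := h1
        _ ≤ δ := min_le_left _ _
    have hyδ : ‖y - x₀‖ ≤ s₀ / (α - 1) := by
      have h1 := mul_pos hsβ hqk1.1
      linarith [hyd, h1]
    have hyball : y ∈ Metric.closedBall xb δ ∩ S := by
      refine ⟨?_, hyS⟩
      rw [Metric.mem_closedBall, dist_eq_norm]
      have htri : ‖y - xb‖ ≤ ‖y - x₀‖ + ‖x₀ - xb‖ := by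
        have := norm_add_le (y - x₀) (x₀ - xb)
        simpa using this
      have : ‖y - xb‖ ≤ s₀ / (α - 1) + ‖x₀ - xb‖ := by linarith
      have h2 : s₀ / (α - 1) + ‖x₀ - xb‖ ≤ min δ ρ := by linarith
      calc ‖y - xb‖ ≤ min δ ρ := by linarith
        _ ≤ δ := min_le_left _ _
    obtain ⟨z, hz, hzsub⟩ := hmi y hyball r ⟨hr0, hrδ⟩
    have hdec : ∀ w ∈ G z, infDist w C ≤ s₀ * (2⁻¹:ℝ)^k - (α - 1) * r := by
      apply aux_decrease hCconv hC0 hadd (hG y) hα hr0 ?_ hzsub hyb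
      have hsr' : (α - 1) * r = s₀ * (2⁻¹:ℝ)^(k+1) := by
        rw [hrdef]
        field_simp
      rw [hsr']
      have hhalf : (2⁻¹:ℝ)^(k+1) ≤ (2⁻¹:ℝ)^k := by
        rw [pow_succ]
        nlinarith [hqk1.1]
      exact mul_le_mul_of_nonneg_left hhalf hs₀.le
    have hval : s₀ * (2⁻¹:ℝ)^k - (α - 1) * r = s₀ * (2⁻¹:ℝ)^(k+1) := by
      rw [hrdef]
      field_simp
      ring
    have hzny : ‖z - y‖ ≤ s₀ / (α - 1) * (2⁻¹:ℝ)^(k+1) := by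
      have := hz.1
      rw [Metric.mem_closedBall, dist_eq_norm] at this
      calc ‖z - y‖ ≤ r := this
        _ = s₀ / (α - 1) * (2⁻¹:ℝ)^(k+1) := by rw [hrdef]; ring
    refine ⟨z, ⟨hz.2, ?_, ?_⟩, hzny⟩
    · have htri : ‖z - x₀‖ ≤ ‖z - y‖ + ‖y - x₀‖ := by
        have := norm_add_le (z - y) (y - x₀)
        simpa using this
      have : ‖z - x₀‖ ≤ s₀ / (α-1) * (2⁻¹:ℝ)^(k+1) + s₀ / (α-1) * (1 - (2⁻¹:ℝ)^k) := by
        linarith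
      calc ‖z - x₀‖ ≤ s₀ / (α-1) * (2⁻¹:ℝ)^(k+1) + s₀ / (α-1) * (1 - (2⁻¹:ℝ)^k) := this
        _ = s₀ / (α-1) * (1 - (2⁻¹:ℝ)^(k+1)) := by ring
    · intro g hg
      calc infDist g C ≤ s₀ * (2⁻¹:ℝ)^k - (α - 1) * r := hdec g hg
        _ = s₀ * (2⁻¹:ℝ)^(k+1) := hval
  choose! F hF1 hF2 using step
  let seq : ℕ → X := fun k => Nat.rec x₀ (fun k y => F k y) k
  have hseqs : ∀ k, seq (k+1) = F k (seq k) := fun k => rfl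
  have hP : ∀ k, P k (seq k) := by
    intro k
    induction k with
    | zero =>
      show P 0 x₀
      refine ⟨hx₀S, by simp, ?_⟩
      simpa using hbound
    | succ k ih =>
      rw [hseqs]
      exact hF1 k (seq k) ih
  have hcauchy : CauchySeq seq := by
    apply cauchySeq_of_le_geometric 2⁻¹ (s₀ / (α-1) * 2⁻¹) (by norm_num)
    intro n
    rw [dist_eq_norm, norm_sub_rev]
    calc ‖seq (n+1) - seq n‖ ≤ s₀ / (α-1) * (2⁻¹:ℝ)^(n+1) := by
          rw [hseqs]; exact hF2 n (seq n) (hP n)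
      _ = s₀ / (α-1) * 2⁻¹ * (2⁻¹:ℝ)^n := by ring
  obtain ⟨x', hx'⟩ := cauchySeq_tendsto_of_complete hcauchy
  have hx'S : x' ∈ S := hScl.mem_of_tendsto hx' (Filter.Eventually.of_forall fun k => (hP k).1)
  have hx'd : ‖x' - x₀‖ ≤ s₀ / (α - 1) := by
    have h1 : Filter.Tendsto (fun k => ‖seq k - x₀‖) Filter.atTop (nhds ‖x' - x₀‖) :=
      (hx'.sub_const x₀).norm
    refine le_of_tendsto' h1 fun k => ?_
    have h2 := (hP k).2.1
    have h3 := mul_pos hsβ (hqk k).1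
    linarith [h2, h3]
  have hx'ball : x' ∈ Metric.closedBall xb ρ := by
    rw [Metric.mem_closedBall, dist_eq_norm]
    have htri : ‖x' - xb‖ ≤ ‖x' - x₀‖ + ‖x₀ - xb‖ := by
      have := norm_add_le (x' - x₀) (x₀ - xb)
      simpa using this
    calc ‖x' - xb‖ ≤ s₀ / (α - 1) + ‖x₀ - xb‖ := by linarith
      _ ≤ min δ ρ := by linarith
      _ ≤ ρ := min_le_right _ _
  have hx'C : G x' ⊆ C := by
    intro z hz
    rw [hCcl.mem_iff_infDist_zero ⟨0, hC0⟩]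
    have hle : ∀ ε : ℝ, 0 < ε → infDist z C ≤ ε := by
      intro ε hε
      obtain ⟨U, hU, hUprop⟩ := hlsc x' hx'ball (Metric.ball z (ε/2)) Metric.isOpen_ball
        ⟨z, hz, Metric.mem_ball_self (by linarith)⟩
      have hev1 : ∀ᶠ k in Filter.atTop, seq k ∈ U := hx'.eventually_mem hU
      have hev2 : ∀ᶠ k in Filter.atTop, s₀ * (2⁻¹:ℝ)^k < ε/2 := by
        have h1 : Filter.Tendsto (fun k : ℕ => s₀ * (2⁻¹:ℝ)^k) Filter.atTop (nhds (s₀ * 0)) :=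
          (tendsto_pow_atTop_nhds_zero_of_lt_one (by norm_num) (by norm_num)).const_mul s₀
        rw [mul_zero] at h1
        exact h1.eventually_lt_const (by linarith)
      obtain ⟨k, hkU, hkb⟩ := (hev1.and hev2).exists
      obtain ⟨g, hgG, hgb⟩ := hUprop (seq k) hkU
      have hdzg : dist z g < ε/2 := by
        rw [Metric.mem_ball] at hgb
        rw [dist_comm]
        exact hgb
      have h3 := (hP k).2.2 g hgG
      calc infDist z C ≤ infDist g C + dist z g := infDist_le_infDist_add_dist
        _ ≤ s₀ * (2⁻¹:ℝ)^k + ε/2 := by linarith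
        _ ≤ ε := by linarith
    have h0' : infDist z C ≤ 0 := by
      apply le_of_forall_pos_le_add
      intro ε hε
      have := hle ε hε
      linarith
    exact le_antisymm h0' infDist_nonneg
  exact ⟨x', hx'S, hx'C, hx'd⟩

set_option maxHeartbeats 1600000 in
lemma primal_cond {X Y : Type*} [NormedAddCommGroup X] [NormedSpace ℝ X] [CompleteSpace X]
    [NormedAddCommGroup Y] [NormedSpace ℝ Y]
    {K : Set Y} (hKcone : ∀ t : ℝ, 0 < t → ∀ y ∈ K, t • y ∈ K)
    {S : Set X} (hScl : IsClosed S)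
    {C : Set Z} (hCcl : IsClosed C) (hCconv : Convex ℝ C)
    (hCcone : ∀ t : ℝ, 0 < t → ∀ z ∈ C, t • z ∈ C) (hC0 : (0:Z) ∈ C)
    (hCadd : ∀ a ∈ C, ∀ b ∈ C, a + b ∈ C)
    {f : X → Y} {G : X → Set Z} (hG : ∀ x, (G x).Nonempty)
    {xb : X} (hxbG : G xb ⊆ C)
    (hweff : LocWeakEffOn f (S ∩ {x | G x ⊆ C}) K xb)
    {Bf : X → Y} (hBf : IsBDerivAt f Bf xb)
    (hlsc : LscAround G xb)
    {α δ : ℝ} (hα : 1 < α) (hδ : 0 < δ) (hmi : MetIncrWith G S C xb α δ)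
    {H : X → Set Z} (hH : OuterPrederivAt G H xb)
    (hHLip : HausLipschitz H)
    {v : X} (hvH : v ∈ upperInv H C) (hvT : v ∈ contingentCone S xb)
    (hcon : -Bf v ∈ interior K) : False := by
  obtain ⟨vn, tn, hvn, htn, htpos, hmem⟩ := hvT
  obtain ⟨δw, hδw0, hw⟩ := hweff
  obtain ⟨l, hl0, hlip⟩ := hHLip
  obtain ⟨ρ, hρ0, hlscρ⟩ := hlsc
  have hβ : 0 < α - 1 := by linarith
  have hBf0 : Bf 0 = 0 := by
    have h := hBf.2.1 2 (by norm_num) 0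
    rw [smul_zero, two_smul] at h
    exact left_eq_add.1 h
  have hopen : IsOpen (-(interior K)) := isOpen_interior.neg
  obtain ⟨η, hη0, hηsub⟩ := Metric.isOpen_iff.1 hopen (Bf v) (Set.mem_neg.2 (by simpa using hcon))
  obtain ⟨γ₀, hγ₀0, hγ₀⟩ := Metric.continuousAt_iff.1 hBf.1.continuousAt (η/4) (by linarith)
  set γ := min γ₀ 1 with hγdef
  have hγ0 : 0 < γ := lt_min hγ₀0 one_pos
  have hγ1 : γ ≤ 1 := min_le_right _ _
  have hγcont : ∀ w : X, ‖w - v‖ < γ → ‖Bf w - Bf v‖ < η/4 := by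
    intro w hw'
    have h1 : dist w v < γ₀ := by
      rw [dist_eq_norm]
      exact lt_of_lt_of_le hw' (min_le_left _ _)
    have := hγ₀ h1
    rwa [dist_eq_norm] at this
  set M := ‖v‖ + 1 with hMdef
  have hM0 : 0 < M := by positivity
  obtain ⟨δr, hδr0, hremb0⟩ := Metric.tendsto_nhdsWithin_nhds.1 hBf.2.2 (η/(4*M)) (by positivity)
  have hremb : ∀ x : X, ‖x - xb‖ < δr → ‖f x - f xb - Bf (x - xb)‖ ≤ η/(4*M) * ‖x - xb‖ := by
    intro x hx
    rcases eq_or_ne x xb with rfl | hne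
    · simp [hBf0]
    · have h1 := hremb0 (Set.mem_compl_singleton_iff.2 hne) (by rwa [dist_eq_norm])
      rw [dist_zero_right, norm_smul, Real.norm_of_nonneg (by positivity)] at h1
      have hxpos : 0 < ‖x - xb‖ := by
        rw [norm_pos_iff]
        exact sub_ne_zero_of_ne hne
      have h2 : ‖f x - f xb - Bf (x - xb)‖ =
          ‖x - xb‖ * (‖x - xb‖⁻¹ * ‖f x - f xb - Bf (x - xb)‖) := by
        field_simp
      rw [h2]
      calc ‖x - xb‖ * (‖x - xb‖⁻¹ * ‖f x - f xb - Bf (x - xb)‖)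
          ≤ ‖x - xb‖ * (η/(4*M)) := mul_le_mul_of_nonneg_left h1.le (norm_nonneg _)
        _ = η/(4*M) * ‖x - xb‖ := by ring
  set ε' := γ * (α-1) / (8 * (M+1)) with hε'def
  have hε'0 : 0 < ε' := by positivity
  obtain ⟨δp, hδp0, hpred⟩ := hH.2 ε' hε'0
  set δ₀ := min δ ρ with hδ₀def
  have hδ₀0 : 0 < δ₀ := lt_min hδ hρ0
  set A := ε' * (M + 1) + l with hAdef
  have hA0 : 0 < A := by positivity
  set T := M + A/(α-1) + 1 with hTdef
  have hAβ : 0 ≤ A/(α-1) := by positivity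
  have hT0 : 0 < T := by rw [hTdef]; linarith
  have hMT : M + A/(α-1) < T := by rw [hTdef]; linarith
  have hMT1 : M ≤ T := by rw [hTdef]; linarith
  have hMT2 : M < T := by rw [hTdef]; linarith
  set εv := min (min 1 (γ/2)) (γ*(α-1)/(4*(l+1))) with hεvdef
  have hεv0 : 0 < εv := by
    apply lt_min (lt_min one_pos (by linarith))
    positivity
  set εt := min (min δp δw) (min δ₀ δr) / T with hεtdef
  have hmins : 0 < min (min δp δw) (min δ₀ δr) :=
    lt_min (lt_min hδp0 hδw0) (lt_min hδ₀0 hδr0)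
  have hεt0 : 0 < εt := div_pos hmins hT0
  obtain ⟨N₁, hN₁⟩ := Metric.tendsto_atTop.1 hvn εv hεv0
  obtain ⟨N₂, hN₂⟩ := Metric.tendsto_atTop.1 htn εt hεt0
  set n := max N₁ N₂ with hndef
  set t := tn n with htdef
  set u := vn n with hudef
  have ht0 : 0 < t := htpos n
  have huv : ‖u - v‖ < εv := by
    have := hN₁ n (le_max_left _ _)
    rwa [dist_eq_norm] at this
  have htεt : t < εt := by
    have := hN₂ n (le_max_right _ _)
    rwa [dist_zero_right, Real.norm_of_nonneg ht0.le] at this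
  have hu1 : ‖u - v‖ < 1 :=
    lt_of_lt_of_le huv (le_trans (min_le_left _ _) (min_le_left _ _))
  have hu2 : ‖u - v‖ < γ/2 :=
    lt_of_lt_of_le huv (le_trans (min_le_left _ _) (min_le_right _ _))
  have hu3 : l * ‖u - v‖ ≤ γ * (α-1) / 4 := by
    have h1 : ‖u - v‖ ≤ γ*(α-1)/(4*(l+1)) := (lt_of_lt_of_le huv (min_le_right _ _)).le
    have h2 : l * ‖u - v‖ ≤ l * (γ*(α-1)/(4*(l+1))) := mul_le_mul_of_nonneg_left h1 hl0
    have h3 : l * (γ*(α-1)/(4*(l+1))) ≤ (l+1) * (γ*(α-1)/(4*(l+1))) :=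
      mul_le_mul_of_nonneg_right (by linarith) (by positivity)
    have h4 : (l+1) * (γ*(α-1)/(4*(l+1))) = γ*(α-1)/4 := by
      field_simp
    linarith
  have huM : ‖u‖ ≤ M := by
    have h := norm_add_le (u - v) v
    rw [sub_add_cancel] at h
    rw [hMdef]
    linarith
  set x₀ := xb + t • u with hx₀def
  have hx₀S : x₀ ∈ S := hmem n
  have hx₀xb : x₀ - xb = t • u := by rw [hx₀def]; abel
  have hx₀n : ‖x₀ - xb‖ = t * ‖u‖ := by
    rw [hx₀xb, norm_smul, Real.norm_of_nonneg ht0.le]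
  have htT : t * T ≤ min (min δp δw) (min δ₀ δr) := by
    rw [hεtdef] at htεt
    have := (lt_div_iff₀ hT0).1 htεt
    linarith
  have htTδp : t * T ≤ δp := le_trans htT (le_trans (min_le_left _ _) (min_le_left _ _))
  have htTδw : t * T ≤ δw := le_trans htT (le_trans (min_le_left _ _) (min_le_right _ _))
  have htTδ₀ : t * T ≤ δ₀ := le_trans htT (le_trans (min_le_right _ _) (min_le_left _ _))
  have htTδr : t * T ≤ δr := le_trans htT (le_trans (min_le_right _ _) (min_le_right _ _))
  have htMT : t * M ≤ t * T := mul_le_mul_of_nonneg_left hMT1 ht0.le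
  have hx₀ball : x₀ ∈ Metric.closedBall xb δp := by
    rw [Metric.mem_closedBall, dist_eq_norm, hx₀n]
    have h1 : t * ‖u‖ ≤ t * M := mul_le_mul_of_nonneg_left huM ht0.le
    linarith
  set s₀ := t * (ε' * ‖u‖ + l * ‖u - v‖ + ε') with hs₀def
  have hlun : 0 ≤ l * ‖u - v‖ := mul_nonneg hl0 (norm_nonneg _)
  have hεu : 0 ≤ ε' * ‖u‖ := by positivity
  have hs₀0 : 0 < s₀ := by
    apply mul_pos ht0
    linarith
  have hs₀A : s₀ ≤ t * A := by
    have h0 : ε' * ‖u‖ ≤ ε' * M := mul_le_mul_of_nonneg_left huM hε'0.le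
    have h0' : l * ‖u - v‖ ≤ l * 1 := mul_le_mul_of_nonneg_left hu1.le hl0
    have h1 : ε' * ‖u‖ + l * ‖u - v‖ + ε' ≤ ε' * (M+1) + l := by linarith [h0, h0']
    rw [hs₀def, hAdef]
    exact mul_le_mul_of_nonneg_left h1 ht0.le
  have hGx₀ : ∀ z ∈ G x₀, infDist z C ≤ s₀ := by
    intro z hz
    have hz' := hpred x₀ hx₀ball hz
    rw [hx₀xb] at hz'
    obtain ⟨a, ha, e, he, rfl⟩ := Set.mem_add.1 hz'
    obtain ⟨g, hg, h, hh, rfl⟩ := Set.mem_add.1 ha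
    rw [hH.1 t ht0 u] at hh
    obtain ⟨h', hh', rfl⟩ := hh
    rw [Metric.mem_closedBall, dist_zero_right] at he
    have hHvne : (H v).Nonempty := by
      by_contra hemp
      rw [Set.not_nonempty_iff_eq_empty] at hemp
      have h1 := hlip u v
      rw [hemp, EMetric.hausdorffEdist, Metric.hausdorffEDist_empty ⟨h', hh'⟩] at h1
      exact ENNReal.ofReal_ne_top (top_le_iff.1 h1)
    have hinf1 : infDist h' (H v) ≤ l * ‖u - v‖ := by
      have h1 : EMetric.infEdist h' (H v) ≤ ENNReal.ofReal (l * ‖u - v‖) := by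
        calc EMetric.infEdist h' (H v)
            ≤ EMetric.infEdist h' (H u) + EMetric.hausdorffEdist (H u) (H v) :=
              EMetric.infEdist_le_infEdist_add_hausdorffEdist
          _ = EMetric.hausdorffEdist (H u) (H v) := by
              rw [EMetric.infEdist, Metric.infEDist_zero_of_mem hh', zero_add]
          _ ≤ _ := hlip u v
      exact ENNReal.toReal_le_of_le_ofReal hlun h1
    have hinf2 : infDist h' C ≤ l * ‖u - v‖ :=
      le_trans (infDist_le_infDist_of_subset hvH hHvne) hinf1
    have hde : dist (g + t • h' + e) (g + t • h') = ‖e‖ := by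
      rw [dist_eq_norm]
      congr 1
      abel
    have hsm : infDist (t • h') C ≤ t * infDist h' C :=
      aux_infDist_smul_le ⟨0, hC0⟩ hCcone ht0 h'
    have hsm2 : t * infDist h' C ≤ t * (l * ‖u - v‖) :=
      mul_le_mul_of_nonneg_left hinf2 ht0.le
    have htu : ‖t • u‖ = t * ‖u‖ := by rw [norm_smul, Real.norm_of_nonneg ht0.le]
    calc infDist (g + t • h' + e) C
        ≤ infDist (g + t • h') C + dist (g + t • h' + e) (g + t • h') :=
          infDist_le_infDist_add_dist
      _ ≤ infDist (t • h') C + ‖e‖ := by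
          have h1 := aux_infDist_add_left_le ⟨0, hC0⟩ hCadd (hxbG hg) (t • h')
          linarith
      _ ≤ t * (l * ‖u - v‖) + ε' * (t * ‖u‖) := by
          rw [htu] at he
          linarith
      _ ≤ s₀ := by
          have hexp : t * (ε' * ‖u‖ + l * ‖u - v‖ + ε')
              = t * (l * ‖u - v‖) + ε' * (t * ‖u‖) + t * ε' := by ring
          rw [hs₀def, hexp]
          linarith [mul_pos ht0 hε'0]
  have hreach : ‖x₀ - xb‖ + s₀ / (α - 1) ≤ min δ ρ := by
    have h1 : ‖x₀ - xb‖ ≤ t * M := by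
      rw [hx₀n]
      exact mul_le_mul_of_nonneg_left huM ht0.le
    have h2 : s₀ / (α - 1) ≤ (t * A) / (α - 1) := by
      exact div_le_div_of_nonneg_right hs₀A hβ.le
    have h3 : (t * A) / (α - 1) = t * (A / (α - 1)) := by ring
    have h4 : t * M + t * (A / (α - 1)) ≤ t * T := by
      have h4' : t * (M + A / (α - 1)) ≤ t * T := mul_le_mul_of_nonneg_left hMT.le ht0.le
      rw [mul_add] at h4'
      exact h4'
    rw [← hδ₀def]
    calc ‖x₀ - xb‖ + s₀ / (α - 1) ≤ t * M + t * (A / (α - 1)) := by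
          rw [h3] at h2
          exact add_le_add h1 h2
      _ ≤ t * T := h4
      _ ≤ δ₀ := htTδ₀
  obtain ⟨x', hx'S, hx'C, hx'd⟩ := reach_feasible hScl hG hCcl hCconv hC0 hCadd
    hα hδ hmi hρ0 hlscρ hx₀S hs₀0 hreach hGx₀
  set w := t⁻¹ • (x' - xb) with hwdef
  have hx'w : x' - xb = t • w := by
    rw [hwdef, smul_inv_smul₀ (ne_of_gt ht0)]
  have hwu : ‖w - u‖ ≤ (ε' * ‖u‖ + l * ‖u - v‖ + ε') / (α - 1) := by
    have h1 : t • (w - u) = x' - x₀ := by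
      rw [smul_sub, ← hx'w, hx₀def]
      abel
    have h2 : t * ‖w - u‖ = ‖x' - x₀‖ := by
      rw [← h1, norm_smul, Real.norm_of_nonneg ht0.le]
    have h3 : t * ‖w - u‖ ≤ t * ((ε' * ‖u‖ + l * ‖u - v‖ + ε') / (α - 1)) := by
      rw [h2]
      calc ‖x' - x₀‖ ≤ s₀ / (α - 1) := hx'd
        _ = t * ((ε' * ‖u‖ + l * ‖u - v‖ + ε') / (α - 1)) := by rw [hs₀def]; ring
    exact le_of_mul_le_mul_left h3 ht0
  have hε'M : ε' * (M+1) / (α-1) = γ/8 := by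
    rw [hε'def]
    field_simp
  have hwv : ‖w - v‖ < γ := by
    have h5 : ‖w - u‖ ≤ γ/8 + γ/4 := by
      have ha1 : (ε' * ‖u‖ + l * ‖u - v‖ + ε') ≤ ε' * (M+1) + l * ‖u - v‖ := by
        have h0 : ε' * ‖u‖ ≤ ε' * M := mul_le_mul_of_nonneg_left huM hε'0.le
        linarith [h0]
      have ha2 : (ε' * ‖u‖ + l * ‖u - v‖ + ε') / (α-1) ≤ (ε' * (M+1) + l * ‖u - v‖) / (α-1) :=
        div_le_div_of_nonneg_right ha1 hβ.le
      have ha3 : (ε' * (M+1) + l * ‖u - v‖) / (α-1)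
          = ε' * (M+1) / (α-1) + (l * ‖u - v‖) / (α-1) := by ring
      have ha4 : (l * ‖u - v‖) / (α-1) ≤ γ/4 := by
        rw [div_le_iff₀ hβ]
        calc l * ‖u - v‖ ≤ γ * (α-1) / 4 := hu3
          _ = γ/4 * (α-1) := by ring
      calc ‖w - u‖ ≤ (ε' * ‖u‖ + l * ‖u - v‖ + ε') / (α - 1) := hwu
        _ ≤ ε' * (M+1) / (α-1) + (l * ‖u - v‖) / (α-1) := by rw [← ha3]; exact ha2
        _ ≤ γ/8 + γ/4 := by rw [hε'M]; linarith
    have htri : ‖w - v‖ ≤ ‖w - u‖ + ‖u - v‖ := by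
      have := norm_add_le (w - u) (u - v)
      simpa using this
    calc ‖w - v‖ ≤ ‖w - u‖ + ‖u - v‖ := htri
      _ < (γ/8 + γ/4) + γ/2 := by linarith
      _ < γ := by linarith
  have hwM : ‖w‖ ≤ M := by
    have h := norm_add_le (w - v) v
    rw [sub_add_cancel] at h
    rw [hMdef]
    linarith
  have hx'xb : ‖x' - xb‖ ≤ t * M := by
    rw [hx'w, norm_smul, Real.norm_of_nonneg ht0.le]
    exact mul_le_mul_of_nonneg_left hwM ht0.le
  have hx'δr : ‖x' - xb‖ < δr := by
    have h1 : t * M < t * T := by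
      exact mul_lt_mul_of_pos_left hMT2 ht0
    linarith
  have hR : ‖f x' - f xb - Bf (x' - xb)‖ ≤ η * t / 4 := by
    calc ‖f x' - f xb - Bf (x' - xb)‖ ≤ η/(4*M) * ‖x' - xb‖ := hremb x' hx'δr
      _ ≤ η/(4*M) * (t * M) := by
          exact mul_le_mul_of_nonneg_left hx'xb (by positivity)
      _ = η * t / 4 := by field_simp; try ring
  set R := f x' - f xb - Bf (x' - xb) with hRdef
  have hBfx' : Bf (x' - xb) = t • Bf w := by
    rw [hx'w, hBf.2.1 t ht0 w]
  have hkey : f xb - f x' = t • (-(Bf w + t⁻¹ • R)) := by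
    rw [smul_neg, smul_add, smul_smul, mul_inv_cancel₀ (ne_of_gt ht0), one_smul, hRdef, hBfx']
    abel
  have hmemball : Bf w + t⁻¹ • R ∈ Metric.ball (Bf v) η := by
    rw [Metric.mem_ball, dist_eq_norm]
    have htri : Bf w + t⁻¹ • R - Bf v = (Bf w - Bf v) + t⁻¹ • R := by abel
    have hRn : ‖t⁻¹ • R‖ ≤ η/4 := by
      rw [norm_smul, Real.norm_of_nonneg (by positivity)]
      have h1 : t⁻¹ * ‖R‖ ≤ t⁻¹ * (η * t / 4) := by
        apply mul_le_mul_of_nonneg_left hR (by positivity)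
      have h2 : t⁻¹ * (η * t / 4) = η/4 := by field_simp; try ring
      linarith
    have hBw := hγcont w hwv
    calc ‖Bf w + t⁻¹ • R - Bf v‖ = ‖(Bf w - Bf v) + t⁻¹ • R‖ := by rw [htri]
      _ ≤ ‖Bf w - Bf v‖ + ‖t⁻¹ • R‖ := norm_add_le _ _
      _ < η/4 + η/4 := by linarith
      _ < η := by linarith
  have hin : -(Bf w + t⁻¹ • R) ∈ interior K := Set.mem_neg.1 (hηsub hmemball)
  have hscale : t • (-(Bf w + t⁻¹ • R)) ∈ interior K := by
    have hsub2 : t • interior K ⊆ interior K := by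
      apply interior_maximal
      · rintro _ ⟨y, hy, rfl⟩
        exact hKcone t ht0 y (interior_subset hy)
      · exact isOpen_interior.smul₀ (ne_of_gt ht0)
    exact hsub2 ⟨_, hin, rfl⟩
  rw [← hkey] at hscale
  have hx'bw : x' ∈ Metric.closedBall xb δw := by
    rw [Metric.mem_closedBall, dist_eq_norm]
    linarith [htMT]
  exact hw x' ⟨⟨hx'S, hx'C⟩, hx'bw⟩ hscale

end AuxProofs

set_option maxHeartbeats 1600000 in
/-- scalarized necessary condition for local weak efficiency. -/
theorem statement_11
    {X Y Z : Type*} [NormedAddCommGroup X] [NormedSpace ℝ X] [CompleteSpace X]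
    [NormedAddCommGroup Y] [NormedSpace ℝ Y] [CompleteSpace Y]
    [NormedAddCommGroup Z] [NormedSpace ℝ Z] [CompleteSpace Z]
    (K : Set Y) (hKconv : Convex ℝ K)
    (hKcone : ∀ t : ℝ, 0 < t → ∀ y ∈ K, t • y ∈ K) (hKint : (interior K).Nonempty)
    (S : Set X) (hSne : S.Nonempty) (hScl : IsClosed S)
    (C : Set Z) (hCcl : IsClosed C) (hCconv : Convex ℝ C)
    (hCcone : ∀ t : ℝ, 0 < t → ∀ z ∈ C, t • z ∈ C) (hC0 : (0:Z) ∈ C)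
    (hCne0 : C ≠ {0}) (hCneuniv : C ≠ Set.univ)
    (f : X → Y) (G : X → Set Z) (hG : ∀ x, (G x).Nonempty)
    (xb : X) (hxbS : xb ∈ S) (hxbG : G xb ⊆ C)
    (hweff : LocWeakEffOn f (S ∩ {x | G x ⊆ C}) K xb)
    (Bf : X → Y) (hBf : IsBDerivAt f Bf xb)
    (hlsc : LscAround G xb) (hmi : MetIncr G S C xb)
    (H : X → Set Z) (hH : OuterPrederivAt G H xb)
    (hconvlike : Convex ℝ (Bf '' (upperInv H C ∩ contingentCone S xb) + K))
    (hH0 : H 0 ⊆ C) (hHLip : HausLipschitz H) :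
    ∃ q : Y →L[ℝ] ℝ, q ≠ 0 ∧ (∀ y ∈ K, 0 ≤ q y) ∧
      ∀ v ∈ upperInv H C ∩ contingentCone S xb, 0 ≤ q (Bf v) := by
  have hKadd : ∀ a ∈ K, ∀ b ∈ K, a + b ∈ K := by
    intro a ha b hb
    have h2 := hKconv ha hb (by norm_num : (0:ℝ) ≤ 1/2) (by norm_num : (0:ℝ) ≤ 1/2)
      (by norm_num : (1:ℝ)/2 + 1/2 = 1)
    have h3 := hKcone 2 (by norm_num) _ h2
    rwa [smul_add, smul_smul, smul_smul, show (2:ℝ)*(1/2) = 1 by norm_num, one_smul,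
      one_smul] at h3
  have hCadd : ∀ a ∈ C, ∀ b ∈ C, a + b ∈ C := by
    intro a ha b hb
    have h2 := hCconv ha hb (by norm_num : (0:ℝ) ≤ 1/2) (by norm_num : (0:ℝ) ≤ 1/2)
      (by norm_num : (1:ℝ)/2 + 1/2 = 1)
    have h3 := hCcone 2 (by norm_num) _ h2
    rwa [smul_add, smul_smul, smul_smul, show (2:ℝ)*(1/2) = 1 by norm_num, one_smul,
      one_smul] at h3
  obtain ⟨α, hα, δ, hδ, hmi'⟩ := hmi
  have hBf0 : Bf 0 = 0 := by
    have h := hBf.2.1 2 (by norm_num) 0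
    rw [smul_zero, two_smul] at h
    exact left_eq_add.1 h
  have h0T : (0:X) ∈ contingentCone S xb := by
    refine ⟨fun _ => 0, fun n => 1/(n+1), tendsto_const_nhds,
      tendsto_one_div_add_atTop_nhds_zero_nat, fun n => by positivity, fun n => by simpa using hxbS⟩
  have h0D : (0:X) ∈ upperInv H C ∩ contingentCone S xb := ⟨hH0, h0T⟩
  have hprimal : ∀ v ∈ upperInv H C ∩ contingentCone S xb, -Bf v ∉ interior K := by
    intro v hv hc
    exact primal_cond hKcone hScl hCcl hCconv hCcone hC0 hCadd hG hxbG hweff hBf hlsc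
      hα hδ hmi' hH hHLip hv.1 hv.2 hc
  obtain ⟨e, he⟩ := hKint
  have heK : e ∈ K := interior_subset he
  have hKaddint : ∀ a ∈ K, ∀ b ∈ interior K, a + b ∈ interior K := by
    intro a ha b hb
    have hsubK : (fun y => a + y) '' interior K ⊆ K := by
      rintro _ ⟨y, hy, rfl⟩
      exact hKadd a ha y (interior_subset hy)
    have hopen : IsOpen ((fun y => a + y) '' interior K) :=
      (isOpenMap_add_left a) _ isOpen_interior
    exact interior_maximal hsubK hopen ⟨b, hb, rfl⟩
  have hDcone : ∀ s : ℝ, 0 < s → ∀ v ∈ upperInv H C ∩ contingentCone S xb,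
      s • v ∈ upperInv H C ∩ contingentCone S xb := by
    intro s hs v hv
    obtain ⟨hv1, vn, tn, h1, h2, h3, h4⟩ := hv
    constructor
    · intro z hz
      rw [hH.1 s hs v] at hz
      obtain ⟨z', hz', rfl⟩ := hz
      exact hCcone s hs z' (hv1 hz')
    · refine ⟨fun n => s • vn n, fun n => tn n / s, h1.const_smul s, ?_,
        fun n => div_pos (h3 n) hs, fun n => ?_⟩
      · simpa using h2.div_const s
      · rw [smul_smul, div_mul_cancel₀ _ (ne_of_gt hs)]
        exact h4 n
  have hUconv : Convex ℝ ((Bf '' (upperInv H C ∩ contingentCone S xb) + K) + interior K) :=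
    hconvlike.add hKconv.interior
  have hUopen : IsOpen ((Bf '' (upperInv H C ∩ contingentCone S xb) + K) + interior K) :=
    IsOpen.add_left isOpen_interior
  have hU0 : (0:Y) ∉ (Bf '' (upperInv H C ∩ contingentCone S xb) + K) + interior K := by
    intro h0
    obtain ⟨a, ha, b, hb, hab⟩ := Set.mem_add.1 h0
    obtain ⟨p, hp, k, hk, rfl⟩ := Set.mem_add.1 ha
    obtain ⟨v, hv, rfl⟩ := hp
    have hq : -Bf v = k + b := by
      rw [add_assoc] at hab
      exact neg_eq_of_add_eq_zero_right hab
    exact hprimal v hv (hq ▸ hKaddint k hk b hb)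
  obtain ⟨q', hq'⟩ := geometric_hahn_banach_open_point hUconv hUopen hU0
  have hq'' : ∀ a ∈ (Bf '' (upperInv H C ∩ contingentCone S xb) + K) + interior K,
      q' a < 0 := by
    intro a ha
    have := hq' a ha
    rwa [map_zero] at this
  have hmemU : ∀ p ∈ Bf '' (upperInv H C ∩ contingentCone S xb), ∀ k ∈ K,
      p + k + e ∈ (Bf '' (upperInv H C ∩ contingentCone S xb) + K) + interior K :=
    fun p hp k hk => Set.add_mem_add (Set.add_mem_add hp hk) he
  have hBfD0 : (0:Y) ∈ Bf '' (upperInv H C ∩ contingentCone S xb) := ⟨0, h0D, hBf0⟩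
  refine ⟨-q', ?_, ?_, ?_⟩
  · intro h0
    have h1 := hq'' _ (hmemU 0 hBfD0 e heK)
    have h2 : q' = 0 := neg_eq_zero.1 h0
    rw [h2] at h1
    simp at h1
  · intro y hy
    by_contra hneg
    push_neg at hneg
    have hqy : 0 < q' y := by
      have : (-q') y = -(q' y) := rfl
      rw [this] at hneg
      linarith
    set s := (|q' e| + |q' e| + 1) / q' y with hsdef
    have hs0 : 0 < s := by positivity
    have hU1 := hq'' _ (hmemU 0 hBfD0 (s • y) (hKcone s hs0 y hy))
    rw [zero_add, map_add, map_smul] at hU1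
    have hsy : s * q' y = |q' e| + |q' e| + 1 := by
      rw [hsdef]
      field_simp
    have hsmul : (s • (q' y) : ℝ) = s * q' y := rfl
    rw [hsmul, hsy] at hU1
    linarith [abs_nonneg (q' e), neg_abs_le (q' e)]
  · intro v hv
    by_contra hneg
    push_neg at hneg
    have hqv : 0 < q' (Bf v) := by
      have : (-q') (Bf v) = -(q' (Bf v)) := rfl
      rw [this] at hneg
      linarith
    set s := (|q' e| + |q' e| + 1) / q' (Bf v) with hsdef
    have hs0 : 0 < s := by positivity
    have hsD : s • v ∈ upperInv H C ∩ contingentCone S xb := hDcone s hs0 v hv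
    have hBfsv : Bf (s • v) = s • Bf v := hBf.2.1 s hs0 v
    have hU1 := hq'' _ (hmemU _ ⟨s • v, hsD, rfl⟩ e heK)
    rw [hBfsv, map_add, map_add, map_smul] at hU1
    have hsy : s * q' (Bf v) = |q' e| + |q' e| + 1 := by
      rw [hsdef]
      field_simp
    have hsmul : (s • (q' (Bf v)) : ℝ) = s * q' (Bf v) := rfl
    rw [hsmul, hsy] at hU1
    linarith [abs_nonneg (q' e), neg_abs_le (q' e)]
end

section
/- Let X, Y, Z be real Banach spaces, K ⊆ Y a convex cone with nonempty interior, S ⊆ X a nonempty closed set, C ⊆ Z a proper closed convex cone with C ≠ {0}, f : X → Y, and G : X ⇉ Z with G(x) ≠ ∅ for all x. Let R = S ∩ {x : G(x) ⊆ C} and let x̄ ∈ R be a locally weakly efficient solution of minimizing f over R. Suppose that f is Fréchet differentiable at x̄; G is lower semicontinuous at every point of some ball around x̄ and metrically C-increasing around x̄ relative to S; G admits a positively homogeneous set-valued mapping H as an outer prederivative at x̄; the derivative Df(x̄) is K-convexlike on H⁺¹(C) ∩ T(S,x̄); H(0) ⊆ C; and H is Lipschitz with respect to the Hausdorff distance.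 Then there exists y* ∈ K⁺ \ {0} such that −Df(x̄)* y* belongs to the negative dual cone of H⁺¹(C) ∩ T(S,x̄), i.e. ⟨−Df(x̄)* y*, v⟩ ≤ 0 for all v ∈ H⁺¹(C) ∩ T(S,x̄). -/
open Filter Topology Metric Set Pointwise
open scoped ENNReal NNReal

section AuxLemmas

variable {Z : Type*} [NormedAddCommGroup Z] [NormedSpace ℝ Z] {C : Set Z}

lemma cone_add_mem (hCconv : Convex ℝ C) (hCcone : ∀ t : ℝ, 0 < t → ∀ z ∈ C, t • z ∈ C)
    {c₁ c₂ : Z} (h1 : c₁ ∈ C) (h2 : c₂ ∈ C) : c₁ + c₂ ∈ C := by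
  have hmid : (1/2 : ℝ) • c₁ + (1/2 : ℝ) • c₂ ∈ C :=
    hCconv h1 h2 (by norm_num) (by norm_num) (by norm_num)
  have h := hCcone 2 (by norm_num) _ hmid
  have he : (2:ℝ) • ((1/2 : ℝ) • c₁ + (1/2 : ℝ) • c₂) = c₁ + c₂ := by
    rw [smul_add, smul_smul, smul_smul]; norm_num
  rwa [he] at h

lemma infDist_add_mem_le (hCconv : Convex ℝ C) (hCcone : ∀ t : ℝ, 0 < t → ∀ z ∈ C, t • z ∈ C)
    {c u : Z} (hc : c ∈ C) : infDist (u + c) C ≤ infDist u C := by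
  have hne : C.Nonempty := ⟨c, hc⟩
  refine le_of_forall_pos_le_add fun ε hε => ?_
  obtain ⟨y, hy, hdy⟩ := (infDist_lt_iff hne).mp (lt_add_of_pos_right _ hε)
  have hyc : y + c ∈ C := cone_add_mem hCconv hCcone hy hc
  calc infDist (u + c) C ≤ dist (u + c) (y + c) := infDist_le_dist_of_mem hyc
    _ = dist u y := dist_add_right u y c
    _ ≤ infDist u C + ε := hdy.le

lemma infDist_smul_cone_le (hCcone : ∀ t : ℝ, 0 < t → ∀ z ∈ C, t • z ∈ C)
    (hne : C.Nonempty) {t : ℝ} (ht : 0 < t) (p : Z) :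
    infDist (t • p) C ≤ t * infDist p C := by
  refine le_of_forall_pos_le_add fun ε hε => ?_
  obtain ⟨y, hy, hdy⟩ := (infDist_lt_iff hne).mp (lt_add_of_pos_right (infDist p C) (by positivity : (0:ℝ) < ε / t))
  have hyC : t • y ∈ C := hCcone t ht y hy
  calc infDist (t • p) C ≤ dist (t • p) (t • y) := infDist_le_dist_of_mem hyC
    _ = t * dist p y := by rw [dist_smul₀, Real.norm_of_nonneg ht.le]
    _ ≤ t * (infDist p C + ε / t) := by nlinarith [mul_le_mul_of_nonneg_left hdy.le ht.le]
    _ = t * infDist p C + ε := by field_simp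
lemma sep_mem (hCcl : IsClosed C) (hCconv : Convex ℝ C)
    (hCcone : ∀ t : ℝ, 0 < t → ∀ z ∈ C, t • z ∈ C) (hC0 : (0:Z) ∈ C)
    {w : Z} {ρ : ℝ} (hρ : 0 < ρ)
    (h : ∀ b : Z, ‖b‖ ≤ ρ → infDist (w + b) C ≤ ρ) : w ∈ C := by
  by_contra hw
  have hCne : C.Nonempty := ⟨0, hC0⟩
  have hs : 0 < infDist w C := (hCcl.notMem_iff_infDist_pos hCne).mp hw
  set s := infDist w C with hs_def
  -- separate w from C + ball 0 (s/2)
  set U := C + ball (0:Z) (s/2) with hU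
  have hUopen : IsOpen U := IsOpen.add_left isOpen_ball
  have hUconv : Convex ℝ U := hCconv.add (convex_ball 0 _)
  have hwU : w ∉ U := by
    intro hmem
    rw [hU, Set.mem_add] at hmem
    obtain ⟨c, hc, b, hb, habe⟩ := hmem
    rw [mem_ball_zero_iff] at hb
    have h1 : infDist w C ≤ dist (c + b) c := by
      rw [habe] at *; exact infDist_le_dist_of_mem hc
    rw [dist_eq_norm] at h1
    simp only [add_sub_cancel_left] at h1
    have : s ≤ ‖b‖ := h1
    linarith
  obtain ⟨ξ, hξ⟩ := geometric_hahn_banach_open_point hUconv hUopen hwU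
  have hξC : ∀ c ∈ C, ξ c ≤ 0 := by
    intro c hc
    by_contra hpos
    push_neg at hpos
    obtain ⟨n, hn⟩ := exists_nat_gt (ξ w / ξ c)
    have hmem : ((n : ℝ) + 1) • c ∈ U := by
      rw [hU, Set.mem_add]
      exact ⟨((n:ℝ)+1) • c, hCcone _ (by positivity) c hc, 0,
        mem_ball_zero_iff.mpr (by simpa using half_pos hs), by simp⟩
    have h2 := hξ _ hmem
    rw [map_smul] at h2
    have h3 : ξ w < ((n:ℝ)) * ξ c := by
      rw [div_lt_iff₀ hpos] at hn; exact hn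
    simp only [smul_eq_mul] at h2
    nlinarith
  have hball : ∀ b : Z, ‖b‖ < s/2 → ξ b < ξ w := by
    intro b hb
    have : b ∈ U := by
      rw [hU, Set.mem_add]
      exact ⟨0, hC0, b, mem_ball_zero_iff.mpr hb, zero_add b⟩
    exact hξ b this
  have hw0 : 0 < ξ w := by
    have := hball 0 (by simpa using half_pos hs)
    simpa using this
  set N := ‖ξ‖ with hN
  have hN0 : 0 < N := by
    rcases lt_or_ge 0 N with h' | h'
    · exact h'
    have hNz : N = 0 := le_antisymm h' (norm_nonneg ξ)
    have := ξ.le_opNorm w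
    rw [← hN, hNz, zero_mul] at this
    have : ξ w ≤ 0 := (le_abs_self _).trans (by simpa using this)
    linarith
  -- lower bound on ξ w
  have hNle : s / 4 * N ≤ ξ w := by
    have hM : N ≤ ξ w / (s/4) := by
      refine ξ.opNorm_le_bound (by positivity) fun b => ?_
      rcases eq_or_ne b 0 with rfl | hb0
      · simp
      have hbpos : 0 < ‖b‖ := norm_pos_iff.mpr hb0
      set b' := ((s/4)/‖b‖) • b with hb'
      have hb'n : ‖b'‖ = s/4 := by
        rw [hb', norm_smul, Real.norm_of_nonneg (by positivity)]
        field_simp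
      have hlt : ‖b'‖ < s/2 := by rw [hb'n]; linarith
      have h1 := hball b' hlt
      have h2 := hball (-b') (by rwa [norm_neg])
      rw [map_neg] at h2
      have habs : |ξ b'| ≤ ξ w := abs_le.mpr ⟨by linarith, h1.le⟩
      rw [hb', map_smul, smul_eq_mul, abs_mul,
        abs_of_pos (by positivity : (0:ℝ) < (s/4)/‖b‖)] at habs
      rw [Real.norm_eq_abs, div_mul_eq_mul_div, le_div_iff₀ (by positivity : (0:ℝ) < s/4)]
      rw [div_mul_eq_mul_div, div_le_iff₀ hbpos] at habs
      nlinarith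
    rw [le_div_iff₀ (by positivity : (0:ℝ) < s/4)] at hM
    linarith [hM]
  -- choose a direction b of norm ρ nearly attaining the operator norm
  set e' := s / (s + 8*ρ) with he'
  have hden : (0:ℝ) < s + 8*ρ := by linarith
  have he'0 : 0 < e' := by positivity
  have he'1 : e' < 1 := by rw [he', div_lt_one hden]; linarith
  have hkey : e' * ρ < s / 4 := by
    rw [he', div_mul_eq_mul_div, div_lt_iff₀ hden]; nlinarith
  obtain ⟨u, hu⟩ : ∃ u : Z, (1 - e') * N * ‖u‖ < ‖ξ u‖ := by
    by_contra hcon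
    push_neg at hcon
    have hle : N ≤ (1 - e') * N := by
      refine ξ.opNorm_le_bound (by nlinarith) fun x => ?_
      have := hcon x; linarith
    nlinarith
  have hu0 : u ≠ 0 := by
    rintro rfl
    simp only [norm_zero, mul_zero, map_zero] at hu
    exact absurd hu (lt_irrefl 0)
  have hunorm : 0 < ‖u‖ := norm_pos_iff.mpr hu0
  set u' := if 0 ≤ ξ u then u else -u with hu'
  have h1u : ξ u' = |ξ u| := by
    rw [hu']; split_ifs with hc
    · exact (abs_of_nonneg hc).symm
    · rw [map_neg, abs_of_neg (not_le.mp hc)]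
  have h2u : ‖u'‖ = ‖u‖ := by rw [hu']; split_ifs <;> simp
  set b := (ρ/‖u‖) • u' with hb
  have hbnorm : ‖b‖ = ρ := by
    rw [hb, norm_smul, Real.norm_of_nonneg (by positivity), h2u]; field_simp
  have hξb : (1 - e') * N * ρ < ξ b := by
    rw [hb, map_smul, smul_eq_mul, h1u]
    have h3 : (1-e')*N*‖u‖ < |ξ u| := by rwa [Real.norm_eq_abs] at hu
    rw [div_mul_eq_mul_div, lt_div_iff₀ hunorm]
    nlinarith
  -- dual lower bound for infDist (w+b) C
  have hlow : (ξ w + ξ b)/N ≤ infDist (w+b) C := by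
    by_contra hlt
    push_neg at hlt
    obtain ⟨y, hyC, hdy⟩ := (infDist_lt_iff hCne).mp hlt
    have h5 : ξ (w + b - y) ≤ N * ‖w + b - y‖ :=
      (le_abs_self _).trans (by simpa [Real.norm_eq_abs] using ξ.le_opNorm (w+b-y))
    rw [map_sub, map_add] at h5
    have h6 : ξ y ≤ 0 := hξC y hyC
    rw [dist_eq_norm] at hdy
    have h7 : N * ‖w+b-y‖ < N * ((ξ w + ξ b)/N) := mul_lt_mul_of_pos_left hdy hN0
    rw [mul_div_cancel₀ _ hN0.ne'] at h7
    linarith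
  have hup : infDist (w+b) C ≤ ρ := h b hbnorm.le
  have hfin : ξ w + ξ b ≤ N * ρ := by
    have h8 := hlow.trans hup
    rwa [div_le_iff₀ hN0, mul_comm] at h8
  have h9 : e' * (N * ρ) < s/4 * N := by nlinarith
  nlinarith [hNle, hξb, hfin]

lemma errstep {X : Type*} [NormedAddCommGroup X] [NormedSpace ℝ X]
    {G : X → Set Z} {S : Set X} {xb : X} {α δ : ℝ}
    (hCcl : IsClosed C) (hCconv : Convex ℝ C)
    (hCcone : ∀ t : ℝ, 0 < t → ∀ z ∈ C, t • z ∈ C) (hC0 : (0:Z) ∈ C)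
    (hmiW : MetIncrWith G S C xb α δ) (hα : 1 < α)
    {x : X} {r : ℝ} (hx : x ∈ Metric.closedBall xb δ ∩ S) (hr : r ∈ Set.Ioo (0:ℝ) δ)
    (hGx : (G x).Nonempty) (hGxd : ∀ u ∈ G x, infDist u C ≤ (α - 1) * r) :
    ∃ z ∈ Metric.closedBall x r ∩ S, G z ⊆ C := by
  obtain ⟨z, hz, hincl⟩ := hmiW x hx r hr
  refine ⟨z, hz, fun w hw => ?_⟩
  have hρ : 0 < α * r := by nlinarith [hr.1]
  refine sep_mem hCcl hCconv hCcone hC0 hρ fun b hb => ?_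
  have h1 : w + b ∈ enlarge (G z) (α * r) := by
    show infDist (w + b) (G z) ≤ α * r
    calc infDist (w + b) (G z) ≤ dist (w + b) w := infDist_le_dist_of_mem hw
      _ = ‖b‖ := by rw [dist_eq_norm]; simp
      _ ≤ α * r := hb
  have h2 : infDist (w + b) (G x + C) ≤ r := hincl h1
  have h3 : ∀ q ∈ G x + C, infDist q C ≤ (α - 1) * r := by
    intro q hq
    rw [Set.mem_add] at hq
    obtain ⟨u, hu, c, hc, rfl⟩ := hq
    exact (infDist_add_mem_le hCconv hCcone hc).trans (hGxd u hu)
  have hne : (G x + C).Nonempty := by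
    obtain ⟨u, hu⟩ := hGx
    exact ⟨u + 0, Set.add_mem_add hu hC0⟩
  have h4 : infDist (w + b) C ≤ r + (α - 1) * r := by
    by_contra hlt
    push_neg at hlt
    have hlt2 : infDist (w + b) (G x + C) < infDist (w + b) C - (α - 1) * r :=
      lt_of_le_of_lt h2 (by linarith)
    obtain ⟨q, hq, hdq⟩ := (infDist_lt_iff hne).mp hlt2
    have h5 : infDist (w + b) C ≤ infDist q C + dist (w + b) q := infDist_le_infDist_add_dist
    have h6 := h3 q hq
    linarith
  calc infDist (w + b) C ≤ r + (α - 1) * r := h4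
    _ = α * r := by ring

lemma approx_feasible {X : Type*} [NormedAddCommGroup X] [NormedSpace ℝ X]
    {G H : X → Set Z} {S : Set X} {xb : X} {α δ₀ : ℝ} {l : ℝ} {v : X}
    (hCcl : IsClosed C) (hCconv : Convex ℝ C)
    (hCcone : ∀ t : ℝ, 0 < t → ∀ z ∈ C, t • z ∈ C) (hC0 : (0:Z) ∈ C)
    (hG : ∀ x, (G x).Nonempty) (hxbG : G xb ⊆ C)
    (hα : 1 < α) (hmiW : MetIncrWith G S C xb α δ₀)
    (hh : ∀ t : ℝ, 0 < t → ∀ u, H (t • u) = t • H u)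
    (hop : ∀ ε > 0, ∃ δ > 0, ∀ x ∈ Metric.closedBall xb δ,
      G x ⊆ G xb + H (x - xb) + Metric.closedBall 0 (ε * ‖x - xb‖))
    (hl0 : 0 ≤ l)
    (hlip : ∀ x₁ x₂ : X, EMetric.hausdorffEdist (H x₁) (H x₂) ≤ ENNReal.ofReal (l * ‖x₁ - x₂‖))
    (hvH : H v ⊆ C) (hδ₀ : 0 < δ₀) :
    ∀ ε > 0, ∃ δ > 0, ∀ t ∈ Set.Ioo (0:ℝ) δ, ∀ vv : X, ‖vv - v‖ < δ → xb + t • vv ∈ S →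
      ∃ z ∈ S, G z ⊆ C ∧ ‖z - (xb + t • vv)‖ ≤ ε * t := by
  intro ε hε
  have hα1 : (0:ℝ) < α - 1 := by linarith
  set ε' := ε * (α - 1) / (3 * (‖v‖ + 1)) with hε'def
  have hε'pos : 0 < ε' := div_pos (mul_pos hε hα1) (by positivity)
  obtain ⟨δ₂, hδ₂pos, hδ₂⟩ := hop ε' hε'pos
  set δ := min 1 (min (δ₂ / (‖v‖+1)) (min (δ₀ / (‖v‖+1))
    (min (ε * (α-1) / (3*(l+1))) (δ₀ / (2*(ε+1)))))) with hδdef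
  have hδpos : 0 < δ :=
    lt_min one_pos (lt_min (by positivity) (lt_min (by positivity)
      (lt_min (div_pos (mul_pos hε hα1) (by positivity)) (by positivity))))
  refine ⟨δ, hδpos, ?_⟩
  rintro t ⟨ht0, htδ⟩ vv hvv hxnS
  have hδ1 : δ ≤ 1 := min_le_left _ _
  have hδa : δ ≤ δ₂ / (‖v‖+1) := le_trans (min_le_right _ _) (min_le_left _ _)
  have hδb : δ ≤ δ₀ / (‖v‖+1) :=
    le_trans (min_le_right _ _) (le_trans (min_le_right _ _) (min_le_left _ _))
  have hδc : δ ≤ ε*(α-1)/(3*(l+1)) :=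
    le_trans (min_le_right _ _) (le_trans (min_le_right _ _)
      (le_trans (min_le_right _ _) (min_le_left _ _)))
  have hδd : δ ≤ δ₀/(2*(ε+1)) :=
    le_trans (min_le_right _ _) (le_trans (min_le_right _ _)
      (le_trans (min_le_right _ _) (min_le_right _ _)))
  have hvvn : ‖vv‖ ≤ ‖v‖ + 1 := by
    have h0 := norm_sub_norm_le vv v
    linarith [hvv.le, hδ1]
  set xn := xb + t • vv with hxn
  have hxnd : ‖xn - xb‖ = t * ‖vv‖ := by
    rw [hxn, add_sub_cancel_left, norm_smul, Real.norm_of_nonneg ht0.le]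
  have htvn : t * ‖vv‖ ≤ δ * (‖v‖ + 1) := by nlinarith [norm_nonneg vv]
  have hxnb2 : xn ∈ Metric.closedBall xb δ₂ := by
    rw [Metric.mem_closedBall, dist_eq_norm, hxnd]
    have h1 : δ * (‖v‖+1) ≤ δ₂ := by
      rw [le_div_iff₀ (by positivity : (0:ℝ) < ‖v‖+1)] at hδa; linarith
    linarith
  have hxnb0 : xn ∈ Metric.closedBall xb δ₀ := by
    rw [Metric.mem_closedBall, dist_eq_norm, hxnd]
    have h1 : δ * (‖v‖+1) ≤ δ₀ := by
      rw [le_div_iff₀ (by positivity : (0:ℝ) < ‖v‖+1)] at hδb; linarith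
    linarith
  set β := l * ‖vv - v‖ + ε' * ‖vv‖ with hβ
  have hβ0 : 0 ≤ β := by positivity
  set r := t * (β + t) / (α - 1) with hr
  have hr0 : 0 < r := div_pos (mul_pos ht0 (by linarith)) hα1
  clear_value ε' δ xn β r
  have hβbound : β + t ≤ ε * (α - 1) := by
    have h3 : ε' * (‖v‖+1) = ε*(α-1)/3 := by
      rw [hε'def]; field_simp
    have h4 : δ * (3*(l+1)) ≤ ε*(α-1) := by
      rw [le_div_iff₀ (by positivity : (0:ℝ) < 3*(l+1))] at hδc; linarith
    have h5 : l * ‖vv - v‖ ≤ l * δ := mul_le_mul_of_nonneg_left hvv.le hl0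
    have h6 : ε' * ‖vv‖ ≤ ε' * (‖v‖+1) := mul_le_mul_of_nonneg_left hvvn hε'pos.le
    rw [hβ]
    nlinarith
  have hrεt : r ≤ ε * t := by
    rw [hr, div_le_iff₀ hα1]
    nlinarith
  have hrδ₀ : r < δ₀ := by
    have h6 : δ*(2*(ε+1)) ≤ δ₀ := by
      rw [le_div_iff₀ (by positivity : (0:ℝ) < 2*(ε+1))] at hδd; linarith
    nlinarith
  have hGd : ∀ u ∈ G xn, infDist u C ≤ (α - 1) * r := by
    intro u hu
    have hsub := hδ₂ xn hxnb2 hu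
    rw [show xn - xb = t • vv from by rw [hxn, add_sub_cancel_left]] at hsub
    rw [hh t ht0 vv] at hsub
    rw [Set.mem_add] at hsub
    obtain ⟨a, ha, bb, hbb, habu⟩ := hsub
    rw [Set.mem_add] at ha
    obtain ⟨g, hg, p', hp', hgpa⟩ := ha
    obtain ⟨p, hp, rfl⟩ := hp'
    have hbbn : ‖bb‖ ≤ ε' * (t * ‖vv‖) := by
      rw [mem_closedBall_zero_iff] at hbb
      rwa [norm_smul, Real.norm_of_nonneg ht0.le] at hbb
    have hpC : infDist p C ≤ l * ‖vv - v‖ := by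
      have h7 : EMetric.infEdist p (H v) ≤ EMetric.hausdorffEdist (H vv) (H v) :=
        EMetric.infEdist_le_hausdorffEdist_of_mem hp
      have h8 : EMetric.infEdist p C ≤ EMetric.infEdist p (H v) := EMetric.infEdist_anti hvH
      have h9 : EMetric.infEdist p C ≤ ENNReal.ofReal (l * ‖vv - v‖) :=
        le_trans (h8.trans h7) (hlip vv v)
      have := ENNReal.toReal_le_of_le_ofReal (by positivity) h9
      simp only [Metric.infDist]; exact this
    have h10 : infDist (g + t • p) C ≤ infDist (t • p) C := by
      rw [add_comm]; exact infDist_add_mem_le hCconv hCcone (hxbG hg)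
    have h11 : infDist (t • p) C ≤ t * infDist p C :=
      infDist_smul_cone_le hCcone ⟨0, hC0⟩ ht0 p
    have h12 : infDist u C ≤ infDist (g + t•p) C + dist u (g + t•p) :=
      infDist_le_infDist_add_dist
    have h13 : dist u (g + t•p) = ‖bb‖ := by
      rw [← habu, ← hgpa, dist_eq_norm, add_sub_cancel_left]
    have h14 : (α-1)*r = t * (β + t) := by
      rw [hr]; field_simp
    have h15 : t * infDist p C ≤ t * (l * ‖vv-v‖) := mul_le_mul_of_nonneg_left hpC ht0.le
    rw [h13] at h12
    have h16 : infDist u C ≤ t * (l * ‖vv-v‖) + ε' * (t * ‖vv‖) := by linarith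
    have h19 : t * (β + t) = t*(l * ‖vv-v‖) + t*(ε' * ‖vv‖) + t*t := by rw [hβ]; ring
    have h20 : ε' * (t * ‖vv‖) = t * (ε' * ‖vv‖) := by ring
    have h21 : 0 ≤ t*t := by positivity
    rw [h14, h19]
    linarith
  obtain ⟨z, hz, hzC⟩ :=
    errstep hCcl hCconv hCcone hC0 hmiW hα ⟨hxnb0, hxnS⟩ ⟨hr0, hrδ₀⟩ (hG xn) hGd
  refine ⟨z, hz.2, hzC, ?_⟩
  have h16 := hz.1
  rw [Metric.mem_closedBall, dist_eq_norm] at h16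
  exact h16.trans hrεt


end AuxLemmas

set_option maxHeartbeats 2000000 in
/-- dual necessary condition for local weak efficiency in adjoint form. -/
theorem statement_12
    {X Y Z : Type*} [NormedAddCommGroup X] [NormedSpace ℝ X] [CompleteSpace X]
    [NormedAddCommGroup Y] [NormedSpace ℝ Y] [CompleteSpace Y]
    [NormedAddCommGroup Z] [NormedSpace ℝ Z] [CompleteSpace Z]
    (K : Set Y) (hKconv : Convex ℝ K)
    (hKcone : ∀ t : ℝ, 0 < t → ∀ y ∈ K, t • y ∈ K) (hKint : (interior K).Nonempty)
    (S : Set X) (hSne : S.Nonempty) (hScl : IsClosed S)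
    (C : Set Z) (hCcl : IsClosed C) (hCconv : Convex ℝ C)
    (hCcone : ∀ t : ℝ, 0 < t → ∀ z ∈ C, t • z ∈ C) (hC0 : (0:Z) ∈ C)
    (hCne0 : C ≠ {0}) (hCneuniv : C ≠ Set.univ)
    (f : X → Y) (G : X → Set Z) (hG : ∀ x, (G x).Nonempty)
    (xb : X) (hxbS : xb ∈ S) (hxbG : G xb ⊆ C)
    (hweff : LocWeakEffOn f (S ∩ {x | G x ⊆ C}) K xb)
    (Df : X →L[ℝ] Y) (hDf : HasFDerivAt f Df xb)
    (hlsc : LscAround G xb) (hmi : MetIncr G S C xb)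
    (H : X → Set Z) (hH : OuterPrederivAt G H xb)
    (hconvlike : Convex ℝ ((fun v => Df v) '' (upperInv H C ∩ contingentCone S xb) + K))
    (hH0 : H 0 ⊆ C) (hHLip : HausLipschitz H) :
    ∃ q : Y →L[ℝ] ℝ, q ≠ 0 ∧ (∀ y ∈ K, 0 ≤ q y) ∧
      ∀ v ∈ upperInv H C ∩ contingentCone S xb, (-(q.comp Df)) v ≤ 0 := by
  obtain ⟨α, hα, δ₀, hδ₀, hmiW⟩ := hmi
  obtain ⟨δ₁, hδ₁, hweffB⟩ := hweff
  obtain ⟨hh, hop⟩ := hH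
  obtain ⟨l, hl0, hlip⟩ := hHLip
  -- cone facts for K
  have hKsm : ∀ t : ℝ, 0 < t → ∀ y ∈ interior K, t • y ∈ interior K := by
    intro t ht y hy
    have hsub : t • interior K ⊆ K := by
      rintro _ ⟨k, hk, rfl⟩
      exact hKcone t ht k (interior_subset hk)
    have hopen : IsOpen (t • interior K) := isOpen_interior.smul₀ (ne_of_gt ht)
    exact interior_maximal hsub hopen (Set.smul_mem_smul_set hy)
  have hKadd : ∀ k ∈ K, ∀ y ∈ interior K, k + y ∈ interior K := by
    intro k hk y hy
    have hopen : IsOpen ({k} + interior K) := IsOpen.add_left isOpen_interior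
    have hsub : {k} + interior K ⊆ K := by
      intro x hx
      rw [Set.mem_add] at hx
      obtain ⟨a, ha, b, hb, rfl⟩ := hx
      rw [Set.mem_singleton_iff] at ha; subst ha
      exact cone_add_mem hKconv hKcone hk (interior_subset hb)
    refine interior_maximal hsub hopen ?_
    rw [Set.mem_add]
    exact ⟨k, rfl, y, hy, rfl⟩
  -- primal necessary condition
  have hprimal : ∀ v, H v ⊆ C → v ∈ contingentCone S xb → -(Df v) ∉ interior K := by
    intro v hvH hvT hcontra
    obtain ⟨vn, tn, hvn, htn, htnpos, hmemS⟩ := hvT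
    obtain ⟨ρ, hρpos, hballK⟩ := Metric.isOpen_iff.mp isOpen_interior _ hcontra
    set Dn := ‖Df‖ with hDn
    have hDn0 : (0:ℝ) ≤ Dn := norm_nonneg _
    clear_value Dn
    set εA := ρ / (4*(Dn+1)) with hεA
    have hεApos : 0 < εA := by rw [hεA]; positivity
    clear_value εA
    obtain ⟨δA, hδApos, hδA⟩ := approx_feasible hCcl hCconv hCcone hC0 hG hxbG hα hmiW
      hh hop hl0 hlip hvH hδ₀ εA hεApos
    set ε₂ := ρ / (4*(‖v‖ + 2 + εA)) with hε₂
    have hε₂pos : 0 < ε₂ := by rw [hε₂]; positivity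
    clear_value ε₂
    have hev := (hDf.isLittleO).def hε₂pos
    rw [Metric.eventually_nhds_iff] at hev
    obtain ⟨δ₃, hδ₃pos, hδ₃⟩ := hev
    set m₁ := min 1 (min δA (ρ / (4*(Dn+1)))) with hm₁
    have hm₁pos : 0 < m₁ := lt_min one_pos (lt_min hδApos (by positivity))
    have hm₁a : m₁ ≤ 1 := min_le_left _ _
    have hm₁b : m₁ ≤ δA := le_trans (min_le_right _ _) (min_le_left _ _)
    have hm₁c : m₁ ≤ ρ / (4*(Dn+1)) := le_trans (min_le_right _ _) (min_le_right _ _)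
    clear_value m₁
    set B₁ := ‖v‖ + 1 + εA with hB₁
    have hB₁pos : 0 < B₁ := by rw [hB₁]; positivity
    clear_value B₁
    set m₂ := min δA (min (δ₁ / B₁) (δ₃ / (2*B₁))) with hm₂
    have hm₂pos : 0 < m₂ := lt_min hδApos (lt_min (by positivity) (by positivity))
    have hm₂a : m₂ ≤ δA := min_le_left _ _
    have hm₂b : m₂ ≤ δ₁ / B₁ := le_trans (min_le_right _ _) (min_le_left _ _)
    have hm₂c : m₂ ≤ δ₃ / (2*B₁) := le_trans (min_le_right _ _) (min_le_right _ _)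
    clear_value m₂
    obtain ⟨N1, hN1⟩ := Metric.tendsto_atTop.mp hvn m₁ hm₁pos
    obtain ⟨N2, hN2⟩ := Metric.tendsto_atTop.mp htn m₂ hm₂pos
    set n := max N1 N2 with hn
    have hn1 := hN1 n (le_max_left _ _)
    have hn2 := hN2 n (le_max_right _ _)
    set t := tn n with htdef
    set vv := vn n with hvvdef
    have ht0 : 0 < t := htnpos n
    have hSmem : xb + t • vv ∈ S := hmemS n
    clear_value t vv
    have htm₂ : t < m₂ := by
      rw [Real.dist_eq, sub_zero] at hn2
      exact lt_of_abs_lt hn2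
    have hvvd : ‖vv - v‖ < m₁ := by rwa [dist_eq_norm] at hn1
    have htA : t ∈ Set.Ioo (0:ℝ) δA := ⟨ht0, lt_of_lt_of_le htm₂ hm₂a⟩
    have hvvA : ‖vv - v‖ < δA := lt_of_lt_of_le hvvd hm₁b
    obtain ⟨z, hzS, hzC, hzd⟩ := hδA t htA vv hvvA hSmem
    have hvv1 : ‖vv - v‖ < 1 := lt_of_lt_of_le hvvd hm₁a
    have hvvρ : ‖vv - v‖ < ρ / (4*(Dn+1)) := lt_of_lt_of_le hvvd hm₁c
    have hvvn : ‖vv‖ ≤ ‖v‖ + 1 := by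
      have h0 := norm_sub_norm_le vv v
      linarith
    have hzxb : ‖z - xb‖ ≤ t * B₁ := by
      have h1 : ‖z - xb‖ ≤ ‖z - (xb + t • vv)‖ + ‖(xb + t • vv) - xb‖ := by
        have e : z - xb = (z - (xb + t • vv)) + ((xb + t • vv) - xb) := by abel
        rw [e]; exact norm_add_le _ _
      rw [add_sub_cancel_left, norm_smul, Real.norm_of_nonneg ht0.le] at h1
      have h2 : t * ‖vv‖ ≤ t * (‖v‖ + 1) := mul_le_mul_of_nonneg_left hvvn ht0.le
      rw [hB₁]
      nlinarith [hzd]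
    have hm₂δ₁ : m₂ * B₁ ≤ δ₁ := by
      rw [le_div_iff₀ hB₁pos] at hm₂b; exact hm₂b
    have hzδ₁ : z ∈ Metric.closedBall xb δ₁ := by
      rw [Metric.mem_closedBall, dist_eq_norm]
      nlinarith [mul_le_mul_of_nonneg_right htm₂.le hB₁pos.le]
    have hm₂δ₃ : m₂ * (2*B₁) ≤ δ₃ := by
      rw [le_div_iff₀ (by positivity : (0:ℝ) < 2*B₁)] at hm₂c; exact hm₂c
    have hzδ₃ : dist z xb < δ₃ := by
      rw [dist_eq_norm]
      nlinarith [mul_le_mul_of_nonneg_right htm₂.le (by positivity : (0:ℝ) ≤ 2*B₁)]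
    have hfz := hδ₃ hzδ₃
    -- numeric component bounds
    have c1 : ε₂ * B₁ < ρ/4 := by
      have e4 : ε₂ * (‖v‖ + 2 + εA) = ρ/4 := by
        rw [hε₂, div_mul_eq_mul_div,
          div_eq_div_iff (by nlinarith [norm_nonneg v] : (4*(‖v‖ + 2 + εA) : ℝ) ≠ 0)
            (by norm_num : (4:ℝ) ≠ 0)]
        ring
      have h5 := mul_lt_mul_of_pos_left (show B₁ < ‖v‖ + 2 + εA by rw [hB₁]; linarith) hε₂pos
      calc ε₂ * B₁ < ε₂ * (‖v‖ + 2 + εA) := h5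
        _ = ρ/4 := e4
    have c2 : Dn * εA < ρ/4 := by
      have e5 : (Dn + 1) * εA = ρ/4 := by rw [hεA]; field_simp
      nlinarith
    have c3 : Dn * (ρ / (4*(Dn+1))) < ρ/4 := by
      have e6 : (Dn + 1) * (ρ / (4*(Dn+1))) = ρ/4 := by field_simp
      nlinarith [div_pos hρpos (by positivity : (0:ℝ) < 4*(Dn+1))]
    have hDfop : ∀ w : X, ‖Df w‖ ≤ Dn * ‖w‖ := fun w => by rw [hDn]; exact Df.le_opNorm w
    have hkey : ‖(f xb - f z) + t • (Df v)‖ < ρ * t := by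
      have e1 : (f xb - f z) + t • Df v
          = -((f z - f xb - Df (z - xb)) + (Df (z - xb) - t • Df v)) := by abel
      rw [e1, norm_neg]
      have h4 : ‖Df (z - xb) - t • Df v‖ ≤ Dn * (εA * t + t * ‖vv - v‖) := by
        have e2 : Df (z - xb) - t • Df v = Df (z - xb - t • v) := by
          rw [← map_smul Df t v, ← map_sub]
        rw [e2]
        have h5 : ‖z - xb - t • v‖ ≤ ‖z - (xb + t • vv)‖ + ‖t • (vv - v)‖ := by
          have e3 : z - xb - t • v = (z - (xb + t • vv)) + t • (vv - v) := by
            rw [smul_sub]; abel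
          rw [e3]; exact norm_add_le _ _
        rw [norm_smul, Real.norm_of_nonneg ht0.le] at h5
        calc ‖Df (z - xb - t • v)‖ ≤ Dn * ‖z - xb - t • v‖ := hDfop _
          _ ≤ Dn * (εA * t + t * ‖vv - v‖) := by nlinarith [hzd]
      have h6 : ‖f z - f xb - Df (z - xb)‖ ≤ ε₂ * (t * B₁) := by
        refine le_trans hfz ?_
        exact mul_le_mul_of_nonneg_left hzxb hε₂pos.le
      calc ‖(f z - f xb - Df (z - xb)) + (Df (z - xb) - t • Df v)‖
          ≤ ‖f z - f xb - Df (z - xb)‖ + ‖Df (z - xb) - t • Df v‖ := norm_add_le _ _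
        _ ≤ ε₂ * (t * B₁) + Dn * (εA * t + t * ‖vv - v‖) := by linarith
        _ < ρ * t := by nlinarith [mul_lt_mul_of_pos_right c1 ht0,
            mul_lt_mul_of_pos_right c2 ht0, mul_lt_mul_of_pos_right c3 ht0,
            mul_le_mul_of_nonneg_left hvvρ.le (mul_nonneg hDn0 ht0.le)]
    set wv := t⁻¹ • (f xb - f z) with hwv
    have hsmul : t • wv = f xb - f z := by rw [hwv, smul_inv_smul₀ ht0.ne']
    clear_value wv
    have hwball : wv ∈ ball (-(Df v)) ρ := by
      rw [mem_ball, dist_eq_norm, sub_neg_eq_add]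
      have h7 : t * ‖wv + Df v‖ < t * ρ := by
        have e3 : t • (wv + Df v) = (f xb - f z) + t • Df v := by
          rw [smul_add, hsmul]
        calc t * ‖wv + Df v‖ = ‖t • (wv + Df v)‖ := by
              rw [norm_smul, Real.norm_of_nonneg ht0.le]
          _ = ‖(f xb - f z) + t • Df v‖ := by rw [e3]
          _ < ρ * t := hkey
          _ = t * ρ := by ring
      exact lt_of_mul_lt_mul_left h7 ht0.le
    have hfint : f xb - f z ∈ interior K := by
      rw [← hsmul]; exact hKsm t ht0 wv (hballK hwball)
    exact hweffB z ⟨⟨hzS, hzC⟩, hzδ₁⟩ hfint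
  -- separation argument
  have h0M : (0:X) ∈ upperInv H C ∩ contingentCone S xb := by
    refine ⟨hH0, ⟨fun _ => 0, fun n => 1/((n:ℝ)+1), tendsto_const_nhds,
      tendsto_one_div_add_atTop_nhds_zero_nat, fun n => by positivity,
      fun n => by simpa using hxbS⟩⟩
  have hdisj : Disjoint (-(interior K))
      ((fun v => Df v) '' (upperInv H C ∩ contingentCone S xb) + K) := by
    rw [Set.disjoint_left]
    rintro a ha haA
    rw [Set.mem_neg] at ha
    rw [Set.mem_add] at haA
    obtain ⟨dv, hdv, k, hk, hsum⟩ := haA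
    obtain ⟨v, hvM, rfl⟩ := hdv
    have h1 : -(Df v) = k + (-a) := by rw [← hsum]; abel
    have h2 : -(Df v) ∈ interior K := by rw [h1]; exact hKadd k hk (-a) ha
    exact hprimal v hvM.1 hvM.2 h2
  obtain ⟨q, u, hq1, hq2⟩ := geometric_hahn_banach_open
    (hKconv.interior.neg) (isOpen_interior.neg) hconvlike hdisj
  obtain ⟨y0, hy0⟩ := hKint
  have hy0K : y0 ∈ K := interior_subset hy0
  have hu_le : ∀ k ∈ K, u ≤ q k := by
    intro k hk
    refine hq2 k ?_
    rw [Set.mem_add]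
    exact ⟨0, ⟨0, h0M, by simp⟩, k, hk, zero_add k⟩
  have hup : ∀ y ∈ interior K, -(q y) < u := by
    intro y hy
    have h3 := hq1 (-y) (Set.neg_mem_neg.mpr hy)
    simpa using h3
  have hqy0 : 0 ≤ q y0 := by
    by_contra hneg
    push_neg at hneg
    have htp : 0 < (|u|+1)/(-(q y0)) :=
      div_pos (by positivity) (by linarith)
    have h8 := hup _ (hKsm _ htp y0 hy0)
    rw [map_smul, smul_eq_mul] at h8
    have e7 : (|u|+1)/(-(q y0)) * q y0 = -(|u|+1) := by
      rw [div_mul_eq_mul_div, div_eq_iff (neg_ne_zero.mpr (ne_of_lt hneg))]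
      ring
    rw [e7] at h8
    simp only [neg_neg] at h8
    linarith [le_abs_self u]
  have hqy0' : 0 < q y0 + 1 := by linarith
  have hu0 : u = 0 := by
    have hle : u ≤ 0 := by
      by_contra h
      push_neg at h
      have htp : 0 < u/(2*(q y0 + 1)) := by positivity
      have h9 := hu_le _ (hKcone _ htp y0 hy0K)
      rw [map_smul, smul_eq_mul] at h9
      have h10 : u/(2*(q y0 + 1)) * q y0 < u := by
        rw [div_mul_eq_mul_div, div_lt_iff₀ (by positivity : (0:ℝ) < 2*(q y0 + 1))]
        nlinarith
      linarith
    have hge : 0 ≤ u := by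
      by_contra h
      push_neg at h
      have htp : 0 < (-u)/(2*(q y0 + 1)) := div_pos (by linarith) (by linarith)
      have h9 := hup _ (hKsm _ htp y0 hy0)
      rw [map_smul, smul_eq_mul] at h9
      have e9 : (-u)/(2*(q y0 + 1)) * (2*(q y0 + 1)) = -u :=
        div_mul_cancel₀ _ (by linarith : (2*(q y0 + 1)) ≠ 0)
      have h10 : (-u)/(2*(q y0 + 1)) * q y0 < -u := by nlinarith
      linarith
    linarith
  have hqy0pos : 0 < q y0 := by
    have h11 := hup y0 hy0
    rw [hu0] at h11
    linarith
  refine ⟨q, ?_, ?_, ?_⟩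
  · intro hq0
    rw [hq0] at hqy0pos
    simp at hqy0pos
  · intro y hy
    have h12 := hu_le y hy
    rwa [hu0] at h12
  · intro v hv
    have hDfv : 0 ≤ q (Df v) := by
      by_contra h
      push_neg at h
      have hs0p : 0 < -(q (Df v))/(2*(q y0 + 1)) := div_pos (by linarith) (by linarith)
      have h11 := hq2 _ (by
        rw [Set.mem_add]
        exact ⟨Df v, ⟨v, hv, rfl⟩, (-(q (Df v))/(2*(q y0 + 1))) • y0,
          hKcone _ hs0p y0 hy0K, rfl⟩)
      rw [hu0, map_add, map_smul, smul_eq_mul] at h11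
      have h13 : -(q (Df v))/(2*(q y0 + 1)) * q y0 ≤ -(q (Df v))/2 := by
        rw [div_mul_eq_mul_div, div_le_div_iff₀ (by positivity) (by norm_num : (0:ℝ) < 2)]
        nlinarith
      linarith
    simp only [ContinuousLinearMap.neg_apply, ContinuousLinearMap.comp_apply]
    linarith
end
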